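/- arXiv:math/0506602 — 6 statements merged into one kernel-verified Lean document; each statement's English description precedes it below -/
import Mathlib

section
/- Let P be a monic integer polynomial and Q_n(t) = t^n P(t) ± R(t) for a fixed integer polynomial R. For any root α of P with |α| > 1 of multiplicity m, and any sufficiently small disk D around α contained in {|z| > 1} and containing no other root of P, there exists N such that for all n > N the polynomial Q_n has exactly m roots (counted with multiplicity) in D. -/
open Polynomial Metric Filter
open scoped Classical Topology


lemma exists_enum {α : Type*} (s : Multiset α) {D : ℕ} (h : Multiset.card s = D) :
    ∃ e : Fin D → α, s = (Finset.univ.val : Multiset (Fin D)).map e := by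
  obtain ⟨L, hL⟩ : ∃ L : List α, (L : Multiset α) = s := ⟨s.toList, s.coe_toList⟩
  have hlen : L.length = D := by rw [← h, ← hL]; simp
  subst hlen
  exact ⟨L.get, by rw [Fin.univ_val_map, List.ofFn_get, hL]⟩

lemma eventually_card_roots_eq {ι : Type*} (l : Filter ι) [l.NeBot]
    (D : ℕ) (f : ι → ℂ[X]) (g : ℂ[X])
    (hfm : ∀ i, (f i).Monic) (hfd : ∀ i, (f i).natDegree = D)
    (hgm : g.Monic) (hgd : g.natDegree = D)
    (hc : ∀ j, Tendsto (fun i => (f i).coeff j) l (𝓝 (g.coeff j)))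
    (α : ℂ) (ρ : ℝ)
    (hsph : ∀ z ∈ sphere α ρ, ¬ g.IsRoot z) :
    ∀ᶠ i in l, ((f i).roots.filter (fun z => z ∈ closedBall α ρ)).card
      = (g.roots.filter (fun z => z ∈ closedBall α ρ)).card := by
  by_contra hcon
  rw [Filter.not_eventually] at hcon
  set S : Set ι := {i | ¬ (((f i).roots.filter (fun z => z ∈ closedBall α ρ)).card
      = (g.roots.filter (fun z => z ∈ closedBall α ρ)).card)} with hS
  have hne : (l ⊓ 𝓟 S).NeBot := Filter.frequently_iff_neBot.mp hcon
  set u : Ultrafilter ι := Ultrafilter.of (l ⊓ 𝓟 S) with hu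
  have hul : (u : Filter ι) ≤ l := (Ultrafilter.of_le _).trans inf_le_left
  have huS : ∀ᶠ i in (u : Filter ι), ¬ (((f i).roots.filter (fun z => z ∈ closedBall α ρ)).card
      = (g.roots.filter (fun z => z ∈ closedBall α ρ)).card) := by
    apply Filter.Eventually.filter_mono ((Ultrafilter.of_le _).trans inf_le_right)
    exact Filter.eventually_principal.mpr (fun _ h => h)
  -- enumeration of the roots of `f i`
  have hcard : ∀ i, Multiset.card (f i).roots = D := fun i => by
    rw [← hfd i]; exact splits_iff_card_roots.mp (IsAlgClosed.splits (f i))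
  choose e he using fun i => exists_enum _ (hcard i)
  have hfne : ∀ i, f i ≠ 0 := fun i => (hfm i).ne_zero
  have heroot : ∀ i j, (f i).IsRoot (e i j) := by
    intro i j
    have : e i j ∈ (f i).roots := by
      rw [he i]
      exact Multiset.mem_map_of_mem _ (Finset.mem_univ_val j)
    exact (mem_roots (hfne i)).mp this
  have hprod : ∀ i, f i = ∏ j : Fin D, (X - C (e i j)) := by
    intro i
    conv_lhs => rw [(IsAlgClosed.splits _).eq_prod_roots_of_monic (hfm i),
      he i]
    rw [Multiset.map_map]
    rfl
  -- uniform bound on roots along u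
  set M : NNReal := (Finset.range (D + 1)).sup (fun j => ‖g.coeff j‖₊) + 2 with hM
  have hbound : ∀ᶠ i in (u : Filter ι), ∀ j, e i j ∈ closedBall (0 : ℂ) (M : ℝ) := by
    have hcoeff : ∀ᶠ i in (u : Filter ι), ∀ j ∈ Finset.range (D + 1),
        ‖(f i).coeff j‖₊ ≤ ‖g.coeff j‖₊ + 1 := by
      rw [Filter.eventually_all_finset]
      intro j _
      have := (hc j).mono_left hul
      have hball := this (Metric.closedBall_mem_nhds (g.coeff j) one_pos)
      filter_upwards [hball] with i hi
      have : dist ((f i).coeff j) (g.coeff j) ≤ 1 := by simpa [Metric.mem_closedBall] using hi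
      calc ‖(f i).coeff j‖₊ ≤ ‖g.coeff j‖₊ + ‖(f i).coeff j - g.coeff j‖₊ := by
            have := nnnorm_add_le (g.coeff j) ((f i).coeff j - g.coeff j)
            simpa using this
        _ ≤ ‖g.coeff j‖₊ + 1 := by
            gcongr
            rw [← NNReal.coe_le_coe]
            simpa [dist_eq_norm] using this
    filter_upwards [hcoeff] with i hi j
    have hcb : (f i).cauchyBound ≤ M := by
      unfold Polynomial.cauchyBound
      rw [(hfm i).leadingCoeff, nnnorm_one, div_one, hM]
      have hSi : (Finset.range ((f i).natDegree)).sup (fun j => ‖(f i).coeff j‖₊)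
          ≤ (Finset.range (D + 1)).sup (fun j => ‖g.coeff j‖₊) + 1 := by
        apply Finset.sup_le
        intro k hk
        have hk' : k ∈ Finset.range (D + 1) := by
          rw [hfd i] at hk
          exact Finset.mem_range.mpr (Nat.lt_succ_of_lt (Finset.mem_range.mp hk))
        calc ‖(f i).coeff k‖₊ ≤ ‖g.coeff k‖₊ + 1 := hi k hk'
          _ ≤ (Finset.range (D + 1)).sup (fun j => ‖g.coeff j‖₊) + 1 :=
              add_le_add_left (Finset.le_sup (f := fun j => ‖g.coeff j‖₊) hk') 1
      calc (Finset.range ((f i).natDegree)).sup (fun j => ‖(f i).coeff j‖₊) + 1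
          ≤ ((Finset.range (D + 1)).sup (fun j => ‖g.coeff j‖₊) + 1) + 1 :=
            add_le_add_left hSi 1
        _ = (Finset.range (D + 1)).sup (fun j => ‖g.coeff j‖₊) + 2 := by
            rw [add_assoc]; norm_num
    have := (heroot i j).norm_lt_cauchyBound (hfne i)
    have h2 : ‖e i j‖₊ ≤ M := le_trans this.le hcb
    simpa [Metric.mem_closedBall, ← NNReal.coe_le_coe] using h2
  -- compactness: the root tuples converge along `u` to some `w`
  have hKc : IsCompact (Set.univ.pi fun _ : Fin D => closedBall (0 : ℂ) (M : ℝ)) :=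
    isCompact_univ_pi fun _ => isCompact_closedBall _ _
  have hle : ↑(Ultrafilter.map e u) ≤ 𝓟 (Set.univ.pi fun _ : Fin D => closedBall (0 : ℂ) (M : ℝ)) := by
    rw [Ultrafilter.coe_map, Filter.le_principal_iff, Filter.mem_map]
    filter_upwards [hbound] with i hi
    exact Set.mem_univ_pi.mpr fun j => hi j
  obtain ⟨w, hwK, hw⟩ := hKc.ultrafilter_le_nhds _ hle
  have hwj : ∀ j, Tendsto (fun i => e i j) (u : Filter ι) (𝓝 (w j)) := by
    have htend : Tendsto e (u : Filter ι) (𝓝 w) := by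
      rwa [Ultrafilter.coe_map] at hw
    exact fun j => (continuous_apply j).continuousAt.tendsto.comp htend
  -- two computations of the limit of `eval x (f i)`
  have heval1 : ∀ x : ℂ, Tendsto (fun i => (f i).eval x) (u : Filter ι) (𝓝 (g.eval x)) := by
    intro x
    have hx : ∀ i, (f i).eval x = ∑ j ∈ Finset.range (D + 1), (f i).coeff j * x ^ j := fun i =>
      eval_eq_sum_range' (by rw [hfd i]; exact Nat.lt_succ_self D) x
    have hgx : g.eval x = ∑ j ∈ Finset.range (D + 1), g.coeff j * x ^ j :=
      eval_eq_sum_range' (by rw [hgd]; exact Nat.lt_succ_self D) x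
    simp only [hx, hgx]
    exact tendsto_finset_sum _ fun j _ => ((hc j).mono_left hul).mul_const _
  have heval2 : ∀ x : ℂ, Tendsto (fun i => (f i).eval x) (u : Filter ι)
      (𝓝 (∏ j : Fin D, (x - w j))) := by
    intro x
    have hx : ∀ i, (f i).eval x = ∏ j : Fin D, (x - e i j) := by
      intro i
      conv_lhs => rw [hprod i]
      rw [eval_prod]
      simp
    simp only [hx]
    exact tendsto_finset_prod _ fun j _ => tendsto_const_nhds.sub (hwj j)
  have hgeval : ∀ x : ℂ, g.eval x = ∏ j : Fin D, (x - w j) := fun x =>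
    tendsto_nhds_unique (heval1 x) (heval2 x)
  have hgfact : g = ∏ j : Fin D, (X - C (w j)) := by
    apply Polynomial.funext
    intro x
    rw [hgeval x, eval_prod]
    simp
  have hgroots : g.roots = (Finset.univ.val : Multiset (Fin D)).map w := by
    rw [hgfact]
    have : (∏ j : Fin D, (X - C (w j)))
        = (((Finset.univ.val : Multiset (Fin D)).map w).map fun a => X - C a).prod := by
      rw [Multiset.map_map]; rfl
    rw [this, roots_multiset_prod_X_sub_C]
  -- the limit roots avoid the sphere, so membership in the ball stabilizes
  have hiff : ∀ j : Fin D, ∀ᶠ i in (u : Filter ι),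
      ((e i j ∈ closedBall α ρ) ↔ (w j ∈ closedBall α ρ)) := by
    intro j
    have hwroot : g.IsRoot (w j) := by
      have : w j ∈ g.roots := by
        rw [hgroots]; exact Multiset.mem_map_of_mem _ (Finset.mem_univ_val j)
      exact (mem_roots hgm.ne_zero).mp this
    have hns : w j ∉ sphere α ρ := fun h => hsph _ h hwroot
    rcases lt_or_gt_of_ne (fun h : dist (w j) α = ρ => hns (mem_sphere.mpr h)) with hlt | hgt
    · have hball : w j ∈ ball α ρ := mem_ball.mpr hlt
      have := (hwj j).eventually (isOpen_ball.eventually_mem hball)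
      filter_upwards [this] with i hi
      simp [ball_subset_closedBall hi, mem_closedBall.mpr hlt.le]
    · have hout : w j ∈ (closedBall α ρ)ᶜ := by
        simp only [Set.mem_compl_iff, mem_closedBall, not_le]
        exact hgt
      have := (hwj j).eventually (isOpen_compl_iff.mpr isClosed_closedBall
        |>.eventually_mem hout)
      filter_upwards [this] with i hi
      constructor
      · intro h; exact absurd h hi
      · intro h; exact absurd h (by simpa [mem_closedBall, not_le] using hgt)
  -- counts are eventually equal along u, contradiction
  have hcount : ∀ᶠ i in (u : Filter ι),
      ((f i).roots.filter (fun z => z ∈ closedBall α ρ)).card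
        = (g.roots.filter (fun z => z ∈ closedBall α ρ)).card := by
    have hall : ∀ᶠ i in (u : Filter ι), ∀ j : Fin D,
        ((e i j ∈ closedBall α ρ) ↔ (w j ∈ closedBall α ρ)) :=
      Filter.eventually_all.mpr hiff
    filter_upwards [hall] with i hi
    rw [he i, hgroots, Multiset.filter_map, Multiset.filter_map,
      Multiset.card_map, Multiset.card_map]
    congr 1
    apply Multiset.filter_congr
    intro j _
    exact hi j
  have : ∀ᶠ i in (u : Filter ι), False := by
    filter_upwards [hcount, huS] with i h1 h2
    exact h2 h1
  exact (Ultrafilter.neBot u).ne (Filter.eventually_false_iff_eq_bot.mp this)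

lemma card_roots_homotopy (p r : ℂ[X]) (hp : p.Monic) (n : ℕ)
    (hn : r.natDegree < n)
    (α : ℂ) (ρ : ℝ)
    (hsph : ∀ s : ℝ, s ∈ Set.Icc (0:ℝ) 1 → ∀ z ∈ sphere α ρ,
        (X ^ n * p + C (s : ℂ) * r).eval z ≠ 0) :
    ((X ^ n * p + r).roots.filter (fun z => z ∈ closedBall α ρ)).card
      = ((X ^ n * p).roots.filter (fun z => z ∈ closedBall α ρ)).card := by
  set F : ℝ → ℂ[X] := fun s => X ^ n * p + C (s : ℂ) * r with hF
  have hXp : (X ^ n * p).Monic := (monic_X_pow n).mul hp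
  have hXpdeg : (X ^ n * p).natDegree = n + p.natDegree := by
    rw [natDegree_mul (pow_ne_zero n X_ne_zero) hp.ne_zero, natDegree_X_pow]
  have hdeg : ∀ c : ℂ, (C c * r).degree < (X ^ n * p).degree := by
    intro c
    refine (degree_mul_le _ _).trans_lt ?_
    have h1 : (C c).degree + r.degree ≤ 0 + r.degree := add_le_add_left degree_C_le _
    have h2 : (0 : WithBot ℕ) + r.degree = r.degree := zero_add _
    have h3 : r.degree ≤ (r.natDegree : WithBot ℕ) := degree_le_natDegree
    have h4 : (r.natDegree : WithBot ℕ) < (n : WithBot ℕ) := by exact_mod_cast hn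
    have h5 : (n : WithBot ℕ) ≤ ((n + p.natDegree : ℕ) : WithBot ℕ) := by
      exact_mod_cast Nat.le_add_right n p.natDegree
    have h6 : ((n + p.natDegree : ℕ) : WithBot ℕ) = (X ^ n * p).degree := by
      rw [degree_eq_natDegree hXp.ne_zero, hXpdeg]
    exact h1.trans_lt ((h2.le.trans h3).trans_lt (h4.trans_le (h5.trans h6.le)))
  have hm : ∀ s : ℝ, (F s).Monic := fun s => hXp.add_of_left (hdeg _)
  have hd : ∀ s : ℝ, (F s).natDegree = n + p.natDegree := fun s => by
    rw [hF]
    simp only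
    rw [natDegree_add_eq_left_of_degree_lt (hdeg _), hXpdeg]
  set cnt : ℝ → ℕ := fun s => ((F s).roots.filter (fun z => z ∈ closedBall α ρ)).card with hcnt
  have hcont : ContinuousOn cnt (Set.Icc (0:ℝ) 1) := by
    intro s hs
    have hne : (𝓝[Set.Icc (0:ℝ) 1] s).NeBot := by
      apply mem_closure_iff_nhdsWithin_neBot.mp
      rw [isClosed_Icc.closure_eq]
      exact hs
    have hcoeff : ∀ j, Tendsto (fun t : ℝ => (F t).coeff j) (𝓝[Set.Icc (0:ℝ) 1] s)
        (𝓝 ((F s).coeff j)) := by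
      intro j
      simp only [hF, coeff_add, coeff_C_mul]
      have : Continuous fun t : ℝ => (X ^ n * p).coeff j + (t : ℂ) * r.coeff j :=
        continuous_const.add (Complex.continuous_ofReal.mul continuous_const)
      exact (this.continuousWithinAt).tendsto
    have hsph' : ∀ z ∈ sphere α ρ, ¬ (F s).IsRoot z := fun z hz hr => hsph s hs z hz hr
    have hev := eventually_card_roots_eq (𝓝[Set.Icc (0:ℝ) 1] s) (n + p.natDegree) F (F s)
      hm hd (hm s) (hd s) hcoeff α ρ hsph'
    exact tendsto_const_nhds.congr' (hev.mono fun t ht => ht.symm)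
  have h01 := isPreconnected_Icc.constant hcont
    (Set.left_mem_Icc.mpr zero_le_one) (Set.right_mem_Icc.mpr zero_le_one)
  have h0 : F 0 = X ^ n * p := by simp [hF]
  have h1 : F 1 = X ^ n * p + r := by simp [hF]
  calc ((X ^ n * p + r).roots.filter (fun z => z ∈ closedBall α ρ)).card
      = cnt 1 := by rw [hcnt]; simp only [h1]
    _ = cnt 0 := h01.symm
    _ = _ := by rw [hcnt]; simp only [h0]

/-- Rouché-type lemma: the roots of `Q_n(t) = t^n P(t) ± R(t)` outside the unit
circle converge (with multiplicity) to those of `P`. -/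
theorem stmt_0 (P R : Polynomial ℤ) (hP : P.Monic) (ε : ℤ) (hε : ε = 1 ∨ ε = -1)
    (α : ℂ) (hroot : (P.map (Int.castRingHom ℂ)).IsRoot α)
    (hout : 1 < ‖α‖)
    (ρ : ℝ) (hρ : 0 < ρ)
    (hD : closedBall α ρ ⊆ {z : ℂ | 1 < ‖z‖})
    (honly : ∀ z ∈ closedBall α ρ, (P.map (Int.castRingHom ℂ)).IsRoot z → z = α) :
    ∃ N : ℕ, ∀ n : ℕ, N < n →
      ((((X ^ n * P + C ε * R).map (Int.castRingHom ℂ)).roots.filter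
          (fun z => z ∈ closedBall α ρ)).card
        = (P.map (Int.castRingHom ℂ)).rootMultiplicity α) := by
  set φ := Int.castRingHom ℂ with hφ
  set p : ℂ[X] := P.map φ with hp
  set r : ℂ[X] := C (φ ε) * (R.map φ) with hr
  have hpm : p.Monic := hP.map φ
  have hpne : p ≠ 0 := hpm.ne_zero
  -- constants from compactness of the sphere
  have hsne : (sphere α ρ).Nonempty := NormedSpace.sphere_nonempty.mpr hρ.le
  obtain ⟨z₀, hz₀, hmin₀⟩ := (isCompact_sphere α ρ).exists_isMinOn hsne
    continuous_norm.continuousOn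
  set a := ‖z₀‖ with haeq
  have ha : 1 < a := by
    have := hD (sphere_subset_closedBall hz₀)
    simpa using this
  obtain ⟨z₁, hz₁, hmin₁⟩ := (isCompact_sphere α ρ).exists_isMinOn hsne
    ((p.continuous.norm).continuousOn)
  set b := ‖p.eval z₁‖ with hbeq
  have hb : 0 < b := by
    rw [hbeq, norm_pos_iff]
    intro h
    have hz₁' : z₁ = α := honly z₁ (sphere_subset_closedBall hz₁) h
    have : dist z₁ α = ρ := mem_sphere.mp hz₁
    rw [hz₁', dist_self] at this
    exact hρ.ne this
  obtain ⟨z₂, hz₂, hmax₂⟩ := (isCompact_sphere α ρ).exists_isMaxOn hsne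
    ((r.continuous.norm).continuousOn)
  set Rs := ‖r.eval z₂‖ with hRseq
  -- choice of N
  have htend : Tendsto (fun n : ℕ => a ^ n * b) atTop atTop :=
    (tendsto_pow_atTop_atTop_of_one_lt ha).atTop_mul_const hb
  obtain ⟨N₀, hN₀⟩ := Filter.eventually_atTop.mp (htend.eventually_gt_atTop Rs)
  refine ⟨max N₀ R.natDegree, fun n hn => ?_⟩
  have hn1 : Rs < a ^ n * b := hN₀ n ((le_max_left _ _).trans hn.le)
  have hn2 : r.natDegree < n := by
    have h1 : r.natDegree ≤ (R.map φ).natDegree := natDegree_C_mul_le _ _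
    have h2 : (R.map φ).natDegree ≤ R.natDegree := natDegree_map_le
    exact lt_of_le_of_lt (h1.trans h2) (lt_of_le_of_lt (le_max_right N₀ _) hn)
  -- rewrite the polynomial
  have hQ : (X ^ n * P + C ε * R).map φ = X ^ n * p + r := by
    rw [Polynomial.map_add, Polynomial.map_mul, Polynomial.map_pow, map_X,
      Polynomial.map_mul, map_C, hp, hr]
  rw [hQ]
  -- sphere estimate
  have hsph : ∀ s : ℝ, s ∈ Set.Icc (0:ℝ) 1 → ∀ z ∈ sphere α ρ,
      (X ^ n * p + C (s : ℂ) * r).eval z ≠ 0 := by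
    intro s hs z hz h0
    have hza : a ≤ ‖z‖ := hmin₀ hz
    have hzb : b ≤ ‖p.eval z‖ := hmin₁ hz
    have hzR : ‖r.eval z‖ ≤ Rs := hmax₂ hz
    have hmain : a ^ n * b ≤ ‖z ^ n * p.eval z‖ := by
      rw [norm_mul, norm_pow]
      exact mul_le_mul (pow_le_pow_left₀ (by linarith) hza n) hzb hb.le
        (pow_nonneg (norm_nonneg z) n)
    have h1 : (z ^ n) * p.eval z = -((s : ℂ) * r.eval z) := by
      simp only [eval_add, eval_mul, eval_pow, eval_X, eval_C] at h0
      exact eq_neg_of_add_eq_zero_left h0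
    have hnorm : ‖z ^ n * p.eval z‖ = ‖(s : ℂ)‖ * ‖r.eval z‖ := by
      rw [h1, norm_neg, norm_mul]
    have hsn : ‖(s : ℂ)‖ ≤ 1 := by
      rw [Complex.norm_real, Real.norm_eq_abs, abs_of_nonneg hs.1]
      exact hs.2
    have hfin : ‖z ^ n * p.eval z‖ ≤ Rs := by
      rw [hnorm]
      calc ‖(s : ℂ)‖ * ‖r.eval z‖ ≤ 1 * Rs :=
            mul_le_mul hsn hzR (norm_nonneg _) zero_le_one
        _ = Rs := one_mul _
    linarith
  rw [card_roots_homotopy p r hpm n hn2 α ρ hsph]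
  -- count the roots of X ^ n * p in the ball
  have hXp0 : (X ^ n * (p : ℂ[X])) ≠ 0 := ((monic_X_pow n).mul hpm).ne_zero
  have hroots : (X ^ n * p).roots = n • ({0} : Multiset ℂ) + p.roots := by
    rw [roots_mul hXp0, roots_pow, roots_X]
  rw [hroots, Multiset.filter_add, Multiset.card_add]
  have h0B : (0 : ℂ) ∉ closedBall α ρ := by
    intro h
    have := hD h
    simp only [Set.mem_setOf_eq, map_zero, norm_zero] at this
    linarith
  have hfirst : ((n • ({0} : Multiset ℂ)).filter (fun z => z ∈ closedBall α ρ)) = 0 := by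
    rw [Multiset.filter_eq_nil]
    intro z hz
    rw [Multiset.nsmul_singleton] at hz
    rw [Multiset.eq_of_mem_replicate hz]
    exact h0B
  rw [hfirst]
  have hsecond : p.roots.filter (fun z => z ∈ closedBall α ρ)
      = p.roots.filter (fun z => α = z) := by
    apply Multiset.filter_congr
    intro z hz
    constructor
    · intro h
      exact (honly z h ((mem_roots hpne).mp hz)).symm
    · rintro rfl
      exact mem_closedBall_self hρ.le
  rw [hsecond, ← Multiset.count_eq_card_filter_eq, count_roots]
  simp
end

section
/- Let P be a monic integer polynomial of degree d with no roots on the unit circle, and set P_*(t) = t^d P(1/t). Then for every positive integer n, the number of roots of Q_n(t) = t^n P(t) ± P_*(t) outside the closed unit disk (counted with multiplicity) is at most the number of roots of P outside the closed unit disk. -/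
open Polynomial Filter
open scoped Classical

/-- compatibility: the complex absolute value as an `AbsoluteValue` (the norm). -/
noncomputable def Complex.abs : AbsoluteValue ℂ ℝ := NormedField.toAbsoluteValue ℂ

lemma Complex.abs_apply (z : ℂ) : Complex.abs z = ‖z‖ := rfl

lemma Complex.norm_eq_abs (z : ℂ) : ‖z‖ = Complex.abs z := rfl

lemma Complex.abs_conj (z : ℂ) : Complex.abs ((starRingEnd ℂ) z) = Complex.abs z := by
  simp [Complex.abs_apply]

lemma Complex.abs_ofReal (r : ℝ) : Complex.abs (r : ℂ) = |r| := by
  simp [Complex.abs_apply]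

lemma Complex.continuous_abs : Continuous Complex.abs := continuous_norm

/-- The number of roots of a polynomial (with integer coefficients) outside the
closed unit disk, counted with multiplicity. -/
noncomputable def bigN (f : Polynomial ℤ) : ℕ :=
  ((f.aroots ℂ).filter (fun z => 1 < ‖z‖)).card

/-- complex version -/
noncomputable def bigNC (f : Polynomial ℂ) : ℕ :=
  ((f.roots).filter (fun z => 1 < Complex.abs z)).card

lemma bigN_eq (f : Polynomial ℤ) : bigN f = bigNC (f.map (Int.castRingHom ℂ)) := by
  simp [bigN, bigNC, aroots_def, algebraMap_int_eq, Complex.abs_apply]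
  congr

/-- Cauchy bound on roots of a monic polynomial. -/
lemma root_bound (p : Polynomial ℂ) (hp : p.Monic) (z : ℂ) (hz : p.eval z = 0) :
    Complex.abs z ≤ max 1 (∑ i ∈ Finset.range p.natDegree, Complex.abs (p.coeff i)) := by
  rcases le_or_gt (Complex.abs z) 1 with h | h
  · exact le_max_of_le_left h
  set D := p.natDegree with hD
  have hD1 : 1 ≤ D := by
    by_contra hcon
    interval_cases D
    · have := hp.natDegree_eq_zero.mp hD.symm
      rw [this] at hz; simp at hz
  have heval : p.eval z = (∑ i ∈ Finset.range D, p.coeff i * z ^ i) + z ^ D := by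
    rw [eval_eq_sum_range, Finset.sum_range_succ, hp.coeff_natDegree, one_mul]
  have hzD : z ^ D = -∑ i ∈ Finset.range D, p.coeff i * z ^ i := by
    rw [heval] at hz; linear_combination hz
  have habs : Complex.abs z ^ D ≤
      (∑ i ∈ Finset.range D, Complex.abs (p.coeff i)) * Complex.abs z ^ (D - 1) := by
    calc Complex.abs z ^ D = Complex.abs (z ^ D) := by rw [map_pow]
    _ = Complex.abs (∑ i ∈ Finset.range D, p.coeff i * z ^ i) := by rw [hzD, AbsoluteValue.map_neg]
    _ ≤ ∑ i ∈ Finset.range D, Complex.abs (p.coeff i * z ^ i) := by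
        exact Complex.abs.sum_le _ _
    _ ≤ ∑ i ∈ Finset.range D, Complex.abs (p.coeff i) * Complex.abs z ^ (D - 1) := by
        apply Finset.sum_le_sum
        intro i hi
        rw [map_mul, map_pow]
        apply mul_le_mul_of_nonneg_left _ (Complex.abs.nonneg _)
        exact pow_le_pow_right₀ (le_of_lt h) (by simp at hi; omega : i ≤ D - 1)
    _ = _ := by rw [← Finset.sum_mul]
  have hpow : Complex.abs z ^ D = Complex.abs z * Complex.abs z ^ (D - 1) := by
    rw [← pow_succ']; congr 1; omega
  rw [hpow] at habs
  have hpos : (0:ℝ) < Complex.abs z ^ (D - 1) := pow_pos (lt_trans one_pos h) _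
  have := le_of_mul_le_mul_right habs hpos
  exact le_max_of_le_right this
noncomputable def gfam (A B : Polynomial ℂ) (e : ℂ) (s : ℝ) : Polynomial ℂ :=
  A + C ((s : ℂ) * e) * B

lemma list_ofFn_get_cast {α : Type*} {l : List α} {n : ℕ} (h : l.length = n) :
    List.ofFn (fun i : Fin n => l.get (Fin.cast h.symm i)) = l := by
  subst h; simpa using List.ofFn_get l

lemma coe_ofFn_eq_map_univ {α : Type*} {n : ℕ} (r : Fin n → α) :
    (↑(List.ofFn r) : Multiset α) = Multiset.map r Finset.univ.val := by
  rw [List.ofFn_eq_map, ← Multiset.map_coe]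
  congr 1

lemma bigNC_of_roots_eq {p : Polynomial ℂ} {n : ℕ} {r : Fin n → ℂ}
    (h : p.roots = ↑(List.ofFn r)) :
    bigNC p = (Finset.univ.filter fun i => 1 < Complex.abs (r i)).card := by
  rw [bigNC, h, coe_ofFn_eq_map_univ, ← Multiset.countP_eq_card_filter,
    Multiset.countP_map, Finset.card, Finset.filter_val]

section fam
variable {A B : Polynomial ℂ} {e : ℂ}

lemma degB_lt (hA : A.Monic) (hB : B.natDegree < A.natDegree) (c : ℂ) :
    (C c * B).degree < A.degree := by
  apply lt_of_le_of_lt (degree_mul_le _ _)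
  apply lt_of_le_of_lt (add_le_add degree_C_le le_rfl)
  rw [zero_add, degree_eq_natDegree hA.ne_zero]
  exact lt_of_le_of_lt degree_le_natDegree (by exact_mod_cast hB)

lemma gfam_monic (hA : A.Monic) (hB : B.natDegree < A.natDegree) (s : ℝ) :
    (gfam A B e s).Monic :=
  hA.add_of_left (degB_lt hA hB _)

lemma gfam_natDegree (hA : A.Monic) (hB : B.natDegree < A.natDegree) (s : ℝ) :
    (gfam A B e s).natDegree = A.natDegree :=
  natDegree_eq_of_degree_eq (degree_add_eq_left_of_degree_lt (degB_lt hA hB _))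

lemma gfam_card_roots (hA : A.Monic) (hB : B.natDegree < A.natDegree) (s : ℝ) :
    Multiset.card (gfam A B e s).roots = A.natDegree := by
  rw [splits_iff_card_roots.mp (IsAlgClosed.splits _), gfam_natDegree hA hB]

lemma gfam_eval (s : ℝ) (z : ℂ) :
    (gfam A B e s).eval z = A.eval z + ((s:ℂ) * e) * B.eval z := by
  simp [gfam]

/-- enumeration of the roots of `gfam A B e s` by `Fin A.natDegree`. -/
lemma gfam_enum (hA : A.Monic) (hB : B.natDegree < A.natDegree) (s : ℝ) :
    ∃ r : Fin A.natDegree → ℂ, (gfam A B e s).roots = ↑(List.ofFn r) := by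
  have hlen : ((gfam A B e s).roots.toList).length = A.natDegree := by
    rw [Multiset.length_toList, gfam_card_roots hA hB]
  refine ⟨fun i => ((gfam A B e s).roots.toList).get (Fin.cast hlen.symm i), ?_⟩
  rw [list_ofFn_get_cast hlen, Multiset.coe_toList]

lemma prod_of_roots_eq {p : Polynomial ℂ} (hp : p.Monic) {n : ℕ} {r : Fin n → ℂ}
    (h : p.roots = ↑(List.ofFn r)) : p = ∏ i, (X - C (r i)) := by
  have h1 : p = (Multiset.map (fun a => X - C a) p.roots).prod :=
    (IsAlgClosed.splits _).eq_prod_roots_of_monic hp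
  rw [h1, h, Multiset.map_coe, List.map_ofFn, ← List.prod_ofFn (f := fun i => X - C (r i))]
  rfl

lemma roots_eq_of_prod {n : ℕ} (r : Fin n → ℂ) :
    (∏ i, (X - C (r i)) : Polynomial ℂ).roots = ↑(List.ofFn r) := by
  have := roots_multiset_prod_X_sub_C (↑(List.ofFn r) : Multiset ℂ)
  rw [← this, Multiset.map_coe, List.map_ofFn]
  congr 1
  rw [← List.prod_ofFn (f := fun i => X - C (r i))]
  rfl

end fam

section conv
variable {A B : Polynomial ℂ} {e : ℂ}

lemma roots_tendsto (hA : A.Monic) (hB : B.natDegree < A.natDegree)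
    {t : ℕ → ℝ} {t0 : ℝ} (ht : Filter.Tendsto t atTop (nhds t0)) :
    ∃ φ : ℕ → ℕ, StrictMono φ ∧ ∃ r : ℕ → Fin A.natDegree → ℂ, ∃ r0 : Fin A.natDegree → ℂ,
      (∀ k, (gfam A B e (t (φ k))).roots = ↑(List.ofFn (r k))) ∧
      ((gfam A B e t0).roots = ↑(List.ofFn r0)) ∧
      (∀ i, Filter.Tendsto (fun k => r k i) atTop (nhds (r0 i))) := by
  classical
  set D := A.natDegree with hD
  choose rr hrr using fun k => gfam_enum (e := e) hA hB (t k)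
  -- uniform bound on |t|
  obtain ⟨T, hT⟩ : ∃ T : ℝ, ∀ k, |t k| ≤ T := by
    obtain ⟨T, hT⟩ := (ht.abs).bddAbove_range
    exact ⟨T, fun k => hT (Set.mem_range_self k)⟩
  set Cb := max 1 (∑ j ∈ Finset.range D,
    (Complex.abs (A.coeff j) + T * (Complex.abs e * Complex.abs (B.coeff j)))) with hCb
  have hCb0 : (0:ℝ) ≤ Cb := le_trans zero_le_one (le_max_left _ _)
  have hbound : ∀ k i, Complex.abs (rr k i) ≤ Cb := by
    intro k i
    have hmem : rr k i ∈ (gfam A B e (t k)).roots := by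
      rw [hrr k]
      exact_mod_cast List.mem_ofFn.mpr ⟨i, rfl⟩
    have hroot : (gfam A B e (t k)).eval (rr k i) = 0 :=
      (mem_roots (gfam_monic hA hB (t k)).ne_zero).mp hmem
    refine le_trans (root_bound _ (gfam_monic hA hB (t k)) _ hroot) ?_
    rw [gfam_natDegree hA hB]
    apply max_le_max le_rfl
    apply Finset.sum_le_sum
    intro j _
    have hcoeff : (gfam A B e (t k)).coeff j = A.coeff j + ((t k : ℂ) * e) * B.coeff j := by
      simp [gfam, coeff_add, coeff_C_mul, mul_assoc]
    rw [hcoeff]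
    refine le_trans (Complex.abs.add_le _ _) ?_
    apply add_le_add le_rfl
    rw [map_mul, map_mul]
    rw [mul_assoc]
    apply mul_le_mul_of_nonneg_right _ (by positivity)
    simpa [Complex.abs_ofReal] using hT k
  -- compactness
  have hmemball : ∀ k, rr k ∈ Metric.closedBall (0 : Fin D → ℂ) Cb := by
    intro k
    rw [mem_closedBall_zero_iff]
    rw [pi_norm_le_iff_of_nonneg hCb0]
    intro i
    simpa [Complex.norm_eq_abs] using hbound k i
  obtain ⟨r0, _, φ, hφ, hconv⟩ :=
    (isCompact_closedBall (0 : Fin D → ℂ) Cb).tendsto_subseq hmemball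
  have hconv' : ∀ i, Filter.Tendsto (fun k => rr (φ k) i) atTop (nhds (r0 i)) :=
    fun i => tendsto_pi_nhds.mp hconv i
  -- identify the limit polynomial
  have hid : gfam A B e t0 = ∏ i, (X - C (r0 i)) := by
    apply Polynomial.funext
    intro z
    have h2 : ∀ k, (gfam A B e (t (φ k))).eval z = ∏ i, (z - rr (φ k) i) := by
      intro k
      rw [prod_of_roots_eq (gfam_monic hA hB _) (hrr (φ k))]
      simp [eval_prod]
    have h1 : Filter.Tendsto (fun k => (gfam A B e (t (φ k))).eval z) atTop
        (nhds ((gfam A B e t0).eval z)) := by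
      simp only [gfam_eval]
      have htc : Filter.Tendsto (fun k => ((t (φ k) : ℝ) : ℂ)) atTop (nhds ((t0 : ℝ) : ℂ)) :=
        (Complex.continuous_ofReal.tendsto t0).comp (ht.comp hφ.tendsto_atTop)
      exact tendsto_const_nhds.add (((htc.mul tendsto_const_nhds)).mul tendsto_const_nhds)
    have h3 : Filter.Tendsto (fun k => ∏ i, (z - rr (φ k) i)) atTop
        (nhds (∏ i, (z - r0 i))) := by
      apply tendsto_finset_prod
      intro i _
      exact tendsto_const_nhds.sub (hconv' i)
    rw [eval_prod]
    simp only [eval_sub, eval_X, eval_C]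
    exact tendsto_nhds_unique (h1.congr (fun k => (h2 k))) h3
  refine ⟨φ, hφ, fun k => rr (φ k), r0, fun k => hrr (φ k), ?_, hconv'⟩
  rw [hid]
  exact roots_eq_of_prod r0

end conv

section count
variable {A B : Polynomial ℂ} {e : ℂ}

lemma eventually_bigNC_ge (hA : A.Monic) (hB : B.natDegree < A.natDegree) (t0 : ℝ) :
    ∀ᶠ s in nhds t0, bigNC (gfam A B e t0) ≤ bigNC (gfam A B e s) := by
  by_contra hcon
  rw [Filter.not_eventually] at hcon
  obtain ⟨t, ht, hlt⟩ := Filter.exists_seq_forall_of_frequently hcon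
  obtain ⟨φ, hφ, r, r0, hr, hr0, hconv⟩ := roots_tendsto (e := e) hA hB ht
  have hev : ∀ᶠ k in atTop, ∀ i, 1 < Complex.abs (r0 i) → 1 < Complex.abs (r k i) := by
    rw [Filter.eventually_all]
    intro i
    by_cases hi : 1 < Complex.abs (r0 i)
    · have habs : Filter.Tendsto (fun k => Complex.abs (r k i)) atTop
          (nhds (Complex.abs (r0 i))) := (Complex.continuous_abs.tendsto _).comp (hconv i)
      filter_upwards [habs (Ioi_mem_nhds hi)] with k hk _
      exact hk
    · filter_upwards with k hk
      exact absurd hk hi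
  obtain ⟨k, hk⟩ := hev.exists
  refine hlt (φ k) ?_
  rw [bigNC_of_roots_eq hr0, bigNC_of_roots_eq (hr k)]
  apply Finset.card_le_card
  intro i hi
  rw [Finset.mem_filter] at hi ⊢
  exact ⟨hi.1, hk i hi.2⟩

lemma eventually_bigNC_eq (hA : A.Monic) (hB : B.natDegree < A.natDegree) (t0 : ℝ)
    (hcirc : ∀ z ∈ (gfam A B e t0).roots, Complex.abs z ≠ 1) :
    ∀ᶠ s in nhds t0, bigNC (gfam A B e s) = bigNC (gfam A B e t0) := by
  by_contra hcon
  rw [Filter.not_eventually] at hcon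
  obtain ⟨t, ht, hlt⟩ := Filter.exists_seq_forall_of_frequently hcon
  obtain ⟨φ, hφ, r, r0, hr, hr0, hconv⟩ := roots_tendsto (e := e) hA hB ht
  have hne : ∀ i, Complex.abs (r0 i) ≠ 1 := by
    intro i
    apply hcirc
    rw [hr0]
    exact_mod_cast List.mem_ofFn.mpr ⟨i, rfl⟩
  have hev : ∀ᶠ k in atTop, ∀ i, (1 < Complex.abs (r0 i) ↔ 1 < Complex.abs (r k i)) := by
    rw [Filter.eventually_all]
    intro i
    have habs : Filter.Tendsto (fun k => Complex.abs (r k i)) atTop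
        (nhds (Complex.abs (r0 i))) := (Complex.continuous_abs.tendsto _).comp (hconv i)
    rcases lt_or_gt_of_ne (hne i) with hi | hi
    · filter_upwards [habs (Iio_mem_nhds hi)] with k hk
      constructor
      · intro h; exact absurd h (not_lt.mpr (le_of_lt hi))
      · intro h; exact absurd h (not_lt.mpr (le_of_lt hk))
    · filter_upwards [habs (Ioi_mem_nhds hi)] with k hk
      exact ⟨fun _ => hk, fun _ => hi⟩
  obtain ⟨k, hk⟩ := hev.exists
  refine hlt (φ k) ?_
  rw [bigNC_of_roots_eq hr0, bigNC_of_roots_eq (hr k)]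
  congr 1
  apply Finset.filter_congr
  intro i _
  exact (hk i).symm

end count

lemma conj_eval (P : Polynomial ℤ) (z : ℂ) :
    eval ((starRingEnd ℂ) z) (P.map (Int.castRingHom ℂ)) =
      (starRingEnd ℂ) (eval z (P.map (Int.castRingHom ℂ))) := by
  rw [eval_map, eval_map, hom_eval₂]
  congr 1
  exact Subsingleton.elim _ _

lemma abs_eval_reverse (P : Polynomial ℤ) {z : ℂ} (hz : Complex.abs z = 1) :
    Complex.abs (eval z ((P.map (Int.castRingHom ℂ)).reverse)) =
      Complex.abs (eval z (P.map (Int.castRingHom ℂ))) := by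
  set Pc := P.map (Int.castRingHom ℂ) with hPc
  have hz0 : z ≠ 0 := by
    intro h; rw [h] at hz; simp at hz
  haveI : Invertible (z⁻¹) := invertibleOfNonzero (inv_ne_zero hz0)
  have key := eval₂_reverse_mul_pow (RingHom.id ℂ) (z⁻¹) Pc
  rw [invOf_eq_inv, inv_inv] at key
  have key' : eval z Pc.reverse * z⁻¹ ^ Pc.natDegree = eval z⁻¹ Pc := key
  have habs := congrArg Complex.abs key'
  rw [map_mul, map_pow, map_inv₀, hz, inv_one, one_pow, mul_one] at habs
  rw [habs]
  have hinv : z⁻¹ = (starRingEnd ℂ) z := Complex.inv_eq_conj (by rw [Complex.norm_eq_abs, hz])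
  rw [hinv, conj_eval, Complex.abs_conj]

/-- For a monic integer polynomial `P` with no roots on the unit circle, each
polynomial `Q_n(t) = t^n P(t) ± P_*(t)` of the Salem-Boyd sequence has at most
`N(P)` roots outside the closed unit disk. -/
theorem stmt_1 (P : Polynomial ℤ) (hP : P.Monic)
    (hcirc : ∀ z : ℂ, (Polynomial.aeval z) P = 0 → ‖z‖ ≠ 1)
    (ε : ℤ) (hε : ε = 1 ∨ ε = -1) :
    ∀ n : ℕ, 1 ≤ n → bigN (X ^ n * P + C ε * P.reverse) ≤ bigN P := by
  intro n hn
  set Pc := P.map (Int.castRingHom ℂ) with hPcdef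
  have hPc : Pc.Monic := hP.map _
  set A : Polynomial ℂ := X ^ n * Pc with hAdef
  set B : Polynomial ℂ := Pc.reverse with hBdef
  set e : ℂ := (ε : ℂ) with hedef
  have hA : A.Monic := (monic_X_pow n).mul hPc
  have hdegA : A.natDegree = n + Pc.natDegree := by
    rw [hAdef, natDegree_mul (pow_ne_zero n X_ne_zero) hPc.ne_zero, natDegree_X_pow]
  have hB : B.natDegree < A.natDegree := by
    show Pc.reverse.natDegree < A.natDegree
    have := reverse_natDegree_le Pc
    omega
  have he : Complex.abs e = 1 := by
    rcases hε with h | h <;> simp [hedef, h]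
  -- the image of the integer polynomial is `gfam A B e 1`
  have hrev : B = Polynomial.map (Int.castRingHom ℂ) P.reverse := by
    rw [hBdef, hPcdef, reverse, reverse,
      (hP.natDegree_map (Int.castRingHom ℂ) : (P.map _).natDegree = P.natDegree), reflect_map]
  have hmap : (X ^ n * P + C ε * P.reverse).map (Int.castRingHom ℂ) = gfam A B e 1 := by
    rw [gfam, Polynomial.map_add, Polynomial.map_mul, Polynomial.map_mul,
      Polynomial.map_pow, map_X, map_C, hrev]
    norm_num
    rw [hAdef, hPcdef]
    rw [hedef]
    simp
  -- eval of P on circle nonzero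
  have hPcirc : ∀ z : ℂ, Complex.abs z = 1 → Pc.eval z ≠ 0 := by
    intro z hz h0
    refine hcirc z ?_ hz
    rw [aeval_def, algebraMap_int_eq, ← eval_map, ← hPcdef, h0]
  -- for |t0| < 1 the polynomial gfam A B e t0 has no roots on the circle
  have hcircg : ∀ t0 : ℝ, |t0| < 1 → ∀ z ∈ (gfam A B e t0).roots, Complex.abs z ≠ 1 := by
    intro t0 ht0 z hz h1
    have hzroot : (gfam A B e t0).eval z = 0 := (mem_roots'.mp hz).2
    rw [gfam_eval] at hzroot
    have hAz : Complex.abs (A.eval z) = Complex.abs (Pc.eval z) := by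
      rw [hAdef, eval_mul, eval_pow, eval_X, map_mul, map_pow, h1, one_pow, one_mul]
    have hBz : Complex.abs (B.eval z) = Complex.abs (Pc.eval z) := abs_eval_reverse P h1
    have hEq : A.eval z = -(((t0 : ℂ) * e) * B.eval z) := by linear_combination hzroot
    have habs := congrArg Complex.abs hEq
    rw [AbsoluteValue.map_neg, map_mul, map_mul, hAz, hBz, Complex.abs_ofReal, he, mul_one] at habs
    have hPz : 0 < Complex.abs (Pc.eval z) :=
      (Complex.abs.pos_iff).mpr (hPcirc z h1)
    nlinarith [hPz, habs, ht0, abs_nonneg t0]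
  -- h is constant on the open unit interval
  have hconst : ∀ s : ℝ, |s| < 1 →
      bigNC (gfam A B e s) = bigNC (gfam A B e 0) := by
    intro s hs
    have hSpre : IsPreconnected (Metric.ball (0:ℝ) 1) := (convex_ball (0:ℝ) 1).isPreconnected
    haveI := Subtype.preconnectedSpace hSpre
    have hlc : IsLocallyConstant
        (fun x : Metric.ball (0:ℝ) 1 => bigNC (gfam A B e ↑x)) := by
      rw [IsLocallyConstant.iff_eventually_eq]
      intro x
      have hx : |(x : ℝ)| < 1 := by
        have h := x.2; rwa [Metric.mem_ball, Real.dist_eq, sub_zero] at h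
      exact (continuousAt_subtype_val).eventually
        (eventually_bigNC_eq hA hB ↑x (hcircg ↑x hx))
    exact hlc.apply_eq_of_preconnectedSpace
      ⟨s, by rw [Metric.mem_ball, Real.dist_eq, sub_zero]; exact hs⟩
      ⟨0, by simp [Metric.mem_ball]⟩
  -- value at 0
  have h0 : bigNC (gfam A B e 0) = bigN P := by
    have hg0 : gfam A B e 0 = A := by simp [gfam]
    rw [hg0, bigN_eq, ← hPcdef]
    rw [bigNC, bigNC, hAdef, roots_mul (mul_ne_zero (pow_ne_zero n X_ne_zero) hPc.ne_zero),
      roots_pow, roots_X, Multiset.filter_add, Multiset.card_add]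
    have : Multiset.filter (fun z => 1 < Complex.abs z) (n • ({0} : Multiset ℂ)) = 0 := by
      rw [Multiset.filter_eq_nil]
      intro a ha
      have : a = 0 := by
        have := Multiset.mem_of_mem_nsmul ha
        simpa using this
      simp [this]
    rw [this]
    simp
  -- conclude
  have hge := eventually_bigNC_ge (e := e) hA hB 1
  have hex : ∃ s : ℝ, bigNC (gfam A B e 1) ≤ bigNC (gfam A B e s) ∧ s ∈ Set.Ioo (0:ℝ) 1 := by
    have h2 : Set.Ioo (0:ℝ) 1 ∈ nhdsWithin 1 (Set.Iio 1) :=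
      Ioo_mem_nhdsLT_of_mem (by constructor <;> norm_num)
    have h1' := hge.filter_mono (nhdsWithin_le_nhds (s := Set.Iio 1))
    exact (h1'.and (Filter.eventually_of_mem h2 (fun x hx => hx))).exists
  obtain ⟨s, hs1, hs2⟩ := hex
  rw [bigN_eq, hmap]
  calc bigNC (gfam A B e 1) ≤ bigNC (gfam A B e s) := hs1
    _ = bigNC (gfam A B e 0) := hconst s (by rw [abs_lt]; exact ⟨by linarith [hs2.1], hs2.2⟩)
    _ = bigN P := h0
end

section
/- For P_m(t) = t^{m+2} - t^{m+1} + (-1)^m 2t, the largest absolute value λ(P_m) of a root of P_m tends to 1 as m → ∞. Precisely: for every ε > 0 there exists M such that for all m > M, every root of P_m has absolute value at most 1 + ε. -/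
open Polynomial

/-- `λ(P_m) → 1` as `m → ∞`: for every `ε > 0` there is `M` such that for all
`m > M` every root of `P_m(t) = t^{m+2} - t^{m+1} + (-1)^m 2 t` has absolute
value at most `1 + ε`. -/
theorem stmt_9 :
    ∀ ε : ℝ, 0 < ε → ∃ M : ℕ, ∀ m : ℕ, M < m →
      ∀ z : ℂ,
        (Polynomial.aeval z)
            ((X : Polynomial ℤ) ^ (m + 2) - X ^ (m + 1) + C ((-1 : ℤ) ^ m * 2) * X) = 0 →
        ‖z‖ ≤ 1 + ε := by
  intro ε hε
  obtain ⟨M, hM⟩ := pow_unbounded_of_one_lt (2 / ε) (by linarith : (1:ℝ) < 1 + ε)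
  refine ⟨M, fun m hm z hz => ?_⟩
  by_contra hlt
  push_neg at hlt
  have heq : z ^ (m + 2) - z ^ (m + 1) + ((-1 : ℂ) ^ m * 2) * z = 0 := by
    simpa [map_ofNat] using hz
  set r := ‖z‖ with hr
  have hr1 : (1 : ℝ) + ε < r := hlt
  have hrpos : 0 < r := by linarith
  -- z^(m+2) = z^(m+1) - (-1)^m*2*z
  have h2 : z ^ (m + 2) = z ^ (m + 1) - ((-1 : ℂ) ^ m * 2) * z := by
    linear_combination heq
  have habs : r ^ (m + 2) ≤ r ^ (m + 1) + 2 * r := by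
    have := congrArg (‖·‖) h2
    rw [norm_pow] at this
    calc r ^ (m + 2) = ‖z ^ (m + 1) - ((-1 : ℂ) ^ m * 2) * z‖ := this
      _ ≤ ‖z ^ (m + 1)‖ + ‖((-1 : ℂ) ^ m * 2) * z‖ :=
          norm_sub_le _ _
      _ = r ^ (m + 1) + 2 * r := by
          rw [norm_pow, norm_mul, norm_mul, norm_pow]
          simp [hr]
  -- so r^m (r - 1) ≤ 2
  have key : r ^ m * (r - 1) ≤ 2 := by
    have h3 : r ^ (m + 1) * (r - 1) ≤ 2 * r := by
      have : r ^ (m + 2) = r ^ (m + 1) * r := by ring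
      nlinarith [pow_pos hrpos (m + 1)]
    have h4 : r ^ m * (r - 1) * r ≤ 2 * r := by
      calc r ^ m * (r - 1) * r = r ^ (m + 1) * (r - 1) := by ring
        _ ≤ 2 * r := h3
    exact le_of_mul_le_mul_right (by linarith) hrpos
  -- but r^m (r-1) > (1+ε)^M · ε > 2
  have hrm : (1 + ε) ^ M < r ^ m := by
    calc (1 + ε) ^ M < (1 + ε) ^ m :=
          pow_lt_pow_right₀ (by linarith) hm
      _ ≤ r ^ m := pow_le_pow_left₀ (by positivity) (le_of_lt hr1) m
  have h2e : 2 < (1 + ε) ^ M * ε := by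
    have := (div_lt_iff₀ hε).mp hM
    linarith
  nlinarith [pow_pos (show (0:ℝ) < 1 + ε by linarith) M]
end

section
/- Let P be a P-V polynomial for the P-V number θ, with no reciprocal factors and P(1) ≠ 0, and let α_n > 1 be the real root of Q_n^±(t) = t^n P(t) ± P_*(t) outside the unit circle (when it exists). If ±ℓ(P) > 0 (where ℓ(P) is the sign of the lowest-degree nonzero coefficient of P), then the sequence (α_n) is monotone increasing and α_n < θ for all n; if ±ℓ(P) < 0, it is monotone decreasing and α_n > θ. -/
open Polynomial

private theorem castRC (x : ℝ) (p : ℤ[X]) : ((aeval x p : ℝ) : ℂ) = aeval (x:ℂ) p := by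
  rw [show ((x:ℂ)) = algebraMap ℝ ℂ x from rfl, aeval_algebraMap_apply]; rfl

private theorem castRC0 {x : ℝ} {p : ℤ[X]} (h : aeval x p = 0) : aeval (x:ℂ) p = 0 := by
  rw [← castRC, h, Complex.ofReal_zero]

private theorem evmap (A : ℤ[X]) (x : ℝ) :
    (A.map (algebraMap ℤ ℝ)).eval x = aeval x A := by
  rw [eval_map, aeval_def]

private theorem auxSign {f : ℝ → ℝ} (hf : Continuous f) {a b : ℝ} (hab : a ≤ b)
    (h : ∀ x, a ≤ x → x ≤ b → f x ≠ 0) : 0 < f a * f b := by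
  rcases lt_trichotomy (f a * f b) 0 with hlt | heq | hgt
  · exfalso
    have h0 : (0:ℝ) ∈ Set.uIcc (f a) (f b) := by
      rcases mul_neg_iff.mp hlt with ⟨h1, h2⟩ | ⟨h1, h2⟩
      · exact Set.mem_uIcc.2 (Or.inr ⟨h2.le, h1.le⟩)
      · exact Set.mem_uIcc.2 (Or.inl ⟨h1.le, h2.le⟩)
    obtain ⟨x, hx, hfx⟩ := intermediate_value_uIcc (a := a) (b := b) hf.continuousOn h0
    rw [Set.uIcc_of_le hab] at hx
    exact h x hx.1 hx.2 hfx
  · exfalso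
    rcases mul_eq_zero.mp heq with h1 | h1
    exacts [h a le_rfl hab h1, h b hab le_rfl h1]
  · exact hgt

private theorem posAtR (A : ℝ[X]) (hlc : 0 < A.leadingCoeff) (c : ℝ)
    (hnr : ∀ y, c ≤ y → A.eval y ≠ 0) : 0 < A.eval c := by
  by_cases hd : A.natDegree = 0
  · obtain ⟨a, rfl⟩ : ∃ a, A = C a := ⟨A.coeff 0, eq_C_of_natDegree_eq_zero hd⟩
    simpa [leadingCoeff] using hlc
  · have htop : Filter.Tendsto (fun x : ℝ => A.eval x) Filter.atTop Filter.atTop :=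
      A.tendsto_atTop_of_leadingCoeff_nonneg
        (natDegree_pos_iff_degree_pos.mp (Nat.pos_of_ne_zero hd)) hlc.le
    obtain ⟨B, hB⟩ := Filter.eventually_atTop.mp (htop.eventually_ge_atTop 1)
    set b := max c B with hb
    have hfb : (1:ℝ) ≤ A.eval b := hB b (le_max_right _ _)
    have hprod : 0 < A.eval c * A.eval b := by
      refine auxSign A.continuous (le_max_left _ _) ?_
      intro x hx _; exact hnr x hx
    nlinarith

private theorem posAtZ (A : ℤ[X]) (hlc : 0 < A.leadingCoeff) (c : ℝ)
    (hnr : ∀ y, c ≤ y → aeval y A ≠ 0) : 0 < aeval c A := by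
  have h := posAtR (A.map (algebraMap ℤ ℝ)) ?_ c ?_
  · rwa [evmap] at h
  · rw [leadingCoeff_map_of_injective (fun a b h => by simpa using h)]
    simpa using hlc
  · intro y hy; rw [evmap]; exact hnr y hy

private theorem negAtZ (A : ℤ[X]) (hlc : A.leadingCoeff < 0) (c : ℝ)
    (hnr : ∀ y, c ≤ y → aeval y A ≠ 0) : aeval c A < 0 := by
  have h := posAtZ (-A) (by simpa using hlc) c ?_
  · rw [map_neg] at h; linarith
  · intro y hy
    rw [map_neg, neg_ne_zero]; exact hnr y hy

private theorem revEval (x : ℝ) (hx : x ≠ 0) (p : ℤ[X]) :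
    aeval x p.reverse = x ^ p.natDegree * aeval x⁻¹ p := by
  have : Invertible (x⁻¹) := invertibleOfNonzero (inv_ne_zero hx)
  have h := Polynomial.eval₂_reflect_mul_pow (algebraMap ℤ ℝ) x⁻¹ p.natDegree p le_rfl
  have hinv : (⅟ (x⁻¹)) = x := by rw [invOf_eq_inv, inv_inv]
  rw [Polynomial.reverse, aeval_def, aeval_def, ← h, hinv, inv_pow]
  field_simp

private theorem auxProd (s : Multiset ℝ) (h : ∀ x ∈ s, 0 ≤ x ∧ x < 1) :
    s.prod ≤ 1 ∧ (s ≠ 0 → s.prod < 1) := by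
  induction s using Multiset.induction with
  | empty => simp
  | cons a t ih =>
    have ha := h a (Multiset.mem_cons_self a t)
    have ht := ih fun x hx => h x (Multiset.mem_cons_of_mem hx)
    have htnn : 0 ≤ t.prod := Multiset.prod_nonneg fun x hx => (h x (Multiset.mem_cons_of_mem hx)).1
    rw [Multiset.prod_cons]
    exact ⟨by nlinarith [ha.1, ha.2, ht.1], fun _ => by nlinarith [ha.1, ha.2, ht.1]⟩

private theorem absProdRoots (A : ℤ[X]) (hm : A.Monic) :
    |(A.coeff 0 : ℝ)| = ((A.map (algebraMap ℤ ℂ)).roots.map (fun z : ℂ => ‖z‖)).prod := by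
  have hsp : (A.map (algebraMap ℤ ℂ)).Splits := IsAlgClosed.splits _
  have h := (hsp.coeff_zero_eq_prod_roots_of_monic (hm.map (algebraMap ℤ ℂ)))
  have := congrArg (fun z : ℂ => ‖z‖) h
  have hnp : ∀ s : Multiset ℂ, ‖s.prod‖ = (s.map (fun z : ℂ => ‖z‖)).prod :=
    fun s => map_multiset_prod (normHom : ℂ →*₀ ℝ) s
  rw [norm_mul, norm_pow, hnp] at this
  simpa [coeff_map, Complex.norm_intCast] using this

private theorem structThm (θ : ℝ) (hθ1 : 1 < θ) (hint : IsIntegral ℤ θ) :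
    ∀ (N : ℕ) (A : ℤ[X]), A.natDegree ≤ N → A.Monic →
      (∀ z : ℂ, aeval z A = 0 → z = (θ:ℂ) ∨ ‖z‖ < 1) →
      ∃ v k, A = X ^ v * (minpoly ℤ θ) ^ k := by
  intro N
  induction N with
  | zero =>
    intro A h0 hm _
    exact ⟨0, 0, by simpa using hm.natDegree_eq_zero.mp (Nat.le_zero.mp h0)⟩
  | succ N ih =>
    intro A hdeg hm hroots
    by_cases h0 : A.natDegree = 0
    · exact ⟨0, 0, by simpa using hm.natDegree_eq_zero.mp h0⟩
    have hd1 : 1 ≤ A.natDegree := Nat.one_le_iff_ne_zero.mpr h0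
    by_cases hθA : aeval θ A = 0
    · obtain ⟨B, hB⟩ := minpoly.isIntegrallyClosed_dvd hint hθA
      have hmm : (minpoly ℤ θ).Monic := minpoly.monic hint
      have hBm : B.Monic := hmm.of_mul_monic_left (hB ▸ hm)
      have hdm : 0 < (minpoly ℤ θ).natDegree := minpoly.natDegree_pos hint
      have hAdeg : A.natDegree = (minpoly ℤ θ).natDegree + B.natDegree := by
        rw [hB, hmm.natDegree_mul hBm]
      have hBdeg : B.natDegree ≤ N := by omega
      obtain ⟨v, k, hvk⟩ := ih B hBdeg hBm
        (fun z hz => hroots z (by rw [hB, map_mul, hz, mul_zero]))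
      exact ⟨v, k + 1, by rw [hB, hvk]; ring⟩
    · -- Kronecker branch: coeff 0 must vanish
      have hA0 : A.coeff 0 = 0 := by
        have habs := absProdRoots A hm
        have hcard : (A.map (algebraMap ℤ ℂ)).roots.card = A.natDegree := by
          rw [splits_iff_card_roots.mp (IsAlgClosed.splits _),
            hm.natDegree_map (algebraMap ℤ ℂ)]
        have hne : (A.map (algebraMap ℤ ℂ)).roots ≠ 0 := by
          intro h; rw [h] at hcard; simp at hcard; omega
        have hlt : (((A.map (algebraMap ℤ ℂ)).roots.map (fun z : ℂ => ‖z‖)).prod) < 1 := by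
          refine (auxProd _ ?_).2 (by simpa using hne)
          intro x hx
          obtain ⟨z, hz, rfl⟩ := Multiset.mem_map.mp hx
          have hzr : aeval z A = 0 := by
            have := isRoot_of_mem_roots hz
            rwa [IsRoot, eval_map, ← aeval_def] at this
          refine ⟨norm_nonneg z, ?_⟩
          rcases hroots z hzr with rfl | hlt
          · exfalso; apply hθA
            have : ((aeval θ A : ℝ) : ℂ) = 0 := by rw [castRC]; exact hzr
            exact_mod_cast this
          · exact hlt
        have : |(A.coeff 0 : ℝ)| < 1 := habs ▸ hlt
        have h2 : |A.coeff 0| < 1 := by exact_mod_cast this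
        exact Int.abs_lt_one_iff.mp h2
      obtain ⟨B, hB⟩ := (X_dvd_iff).mpr hA0
      have hBm : B.Monic := monic_X.of_mul_monic_left (hB ▸ hm)
      have hAdeg : A.natDegree = 1 + B.natDegree := by
        rw [hB, monic_X.natDegree_mul hBm, natDegree_X]
      obtain ⟨v, k, hvk⟩ := ih B (by omega) hBm
        (fun z hz => hroots z (by rw [hB, map_mul, hz, mul_zero]))
      exact ⟨v + 1, k, by rw [hB, hvk]; ring⟩

private theorem coreM (θ : ℝ) (hθ1 : 1 < θ) (hint : IsIntegral ℤ θ)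
    (hroots : ∀ z : ℂ, aeval z (minpoly ℤ θ) = 0 → z = (θ:ℂ) ∨ ‖z‖ < 1)
    (hnrecip : ¬((minpoly ℤ θ).reverse = minpoly ℤ θ ∧ 0 < (minpoly ℤ θ).natDegree)) :
    ∀ r : ℝ, 0 < r → r * θ ≤ 1 → aeval r (minpoly ℤ θ) ≠ 0 := by
  intro r hr0 hrθ hr
  set m := minpoly ℤ θ with hm_def
  have hm : m.Monic := minpoly.monic hint
  set mC := m.map (algebraMap ℤ ℂ) with hmC_def
  have hmCm : mC.Monic := hm.map _
  have hmC0 : mC ≠ 0 := hmCm.ne_zero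
  -- separability / nodup roots
  have hQint : IsIntegral ℚ θ := hint.tower_top
  have hqm : minpoly ℚ θ = m.map (algebraMap ℤ ℚ) :=
    minpoly.isIntegrallyClosed_eq_field_fractions' ℚ hint
  have hsep : (minpoly ℚ θ).Separable := (minpoly.irreducible hQint).separable
  have hmCq : mC = (minpoly ℚ θ).map (algebraMap ℚ ℂ) := by
    rw [hqm, map_map, ← IsScalarTower.algebraMap_eq]
  have hnodup : mC.roots.Nodup := by rw [hmCq]; exact nodup_roots hsep.map
  -- membership of θ and r
  have hθmem : (θ:ℂ) ∈ mC.roots := by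
    rw [mem_roots hmC0, IsRoot, eval_map, ← aeval_def]
    exact castRC0 (minpoly.aeval ℤ θ)
  have hrθlt : r < θ := by nlinarith
  have hrne : (r:ℂ) ≠ (θ:ℂ) := by exact_mod_cast hrθlt.ne
  have hrmem : (r:ℂ) ∈ mC.roots := by
    rw [mem_roots hmC0, IsRoot, eval_map, ← aeval_def]
    exact castRC0 hr
  -- decompose the multiset of roots
  have h1 : mC.roots = (θ:ℂ) ::ₘ mC.roots.erase (θ:ℂ) := (Multiset.cons_erase hθmem).symm
  have hrmem' : (r:ℂ) ∈ mC.roots.erase (θ:ℂ) := Multiset.mem_erase_of_ne hrne |>.mpr hrmem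
  set R2 := (mC.roots.erase (θ:ℂ)).erase (r:ℂ) with hR2
  have h2 : mC.roots.erase (θ:ℂ) = (r:ℂ) ::ₘ R2 := (Multiset.cons_erase hrmem').symm
  have hsmall : ∀ x ∈ R2.map (fun z : ℂ => ‖z‖), 0 ≤ x ∧ x < 1 := by
    intro x hx
    obtain ⟨z, hz, rfl⟩ := Multiset.mem_map.mp hx
    have hzR : z ∈ mC.roots := Multiset.mem_of_mem_erase (Multiset.mem_of_mem_erase hz)
    have hzroot : aeval z m = 0 := by
      have := isRoot_of_mem_roots hzR; rwa [IsRoot, eval_map, ← aeval_def] at this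
    have hzneθ : z ≠ (θ:ℂ) := by
      intro h; subst h
      exact hnodup.notMem_erase (Multiset.mem_of_mem_erase hz)
    rcases hroots z hzroot with h | h
    · exact absurd h hzneθ
    · exact ⟨norm_nonneg z, h⟩
  have hprod2 := auxProd (R2.map (fun z : ℂ => ‖z‖)) hsmall
  have hprodnn : (0:ℝ) ≤ (R2.map (fun z : ℂ => ‖z‖)).prod :=
    Multiset.prod_nonneg (fun x hx => (hsmall x hx).1)
  -- coeff 0 bound
  have hc0ne : m.coeff 0 ≠ 0 := by
    intro h
    have : (minpoly ℚ θ).coeff 0 ≠ 0 :=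
      minpoly.coeff_zero_ne_zero hQint (by positivity)
    rw [hqm] at this
    simp [coeff_map, h] at this
  have habs : |(m.coeff 0 : ℝ)| = θ * (r * (R2.map (fun z : ℂ => ‖z‖)).prod) := by
    rw [absProdRoots m hm, ← hmC_def, h1, h2]
    simp only [Multiset.map_cons, Multiset.prod_cons]
    rw [Complex.norm_real, Real.norm_eq_abs, Complex.norm_real, Real.norm_eq_abs, abs_of_pos (by linarith), abs_of_pos hr0]
  have h1le : (1:ℝ) ≤ |(m.coeff 0 : ℝ)| := by
    have : (1:ℤ) ≤ |m.coeff 0| := Int.one_le_abs (by exact_mod_cast hc0ne)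
    exact_mod_cast this
  -- equality analysis
  have hR2empty : R2 = 0 := by
    by_contra hne
    have hlt := hprod2.2 (by simpa using hne)
    nlinarith [habs, h1le]
  have hθr1 : θ * r = 1 := by
    rw [hR2empty] at habs; simp at habs
    nlinarith [habs, h1le]
  -- roots are exactly {θ, r}
  have hroots_eq : mC.roots = {(θ:ℂ), (r:ℂ)} := by
    rw [h1, h2, hR2empty]; rfl
  have hdeg2 : m.natDegree = 2 := by
    have hcard : mC.roots.card = mC.natDegree :=
      splits_iff_card_roots.mp (IsAlgClosed.splits _)
    rw [hroots_eq] at hcard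
    rw [← hm.natDegree_map (algebraMap ℤ ℂ), ← hcard]; rfl
  have hprodform : mC = (X - C (θ:ℂ)) * ((X - C (r:ℂ)) * 1) := by
    have := (IsAlgClosed.splits _).eq_prod_roots_of_monic hmCm
    rw [hroots_eq] at this
    simpa using this
  have hcoeff0 : m.coeff 0 = 1 := by
    have : mC.coeff 0 = (θ:ℂ) * (r:ℂ) := by
      rw [hprodform]; simp [coeff_zero_eq_eval_zero]
    rw [coeff_map] at this
    have h1 : ((m.coeff 0 : ℤ) : ℂ) = ((θ * r : ℝ) : ℂ) := by
      rw [show ((m.coeff 0 : ℤ):ℂ) = (algebraMap ℤ ℂ) (m.coeff 0) from rfl, this]; push_cast; ring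
    rw [hθr1] at h1
    exact_mod_cast h1
  have hcoeff2 : m.coeff 2 = 1 := by
    have := hm.leadingCoeff
    rwa [leadingCoeff, hdeg2] at this
  -- m is reciprocal: contradiction
  apply hnrecip
  constructor
  · ext n
    rw [coeff_reverse, hdeg2]
    match n with
    | 0 => rw [revAt_le (by norm_num), hcoeff0, hcoeff2]
    | 1 => rw [revAt_le (by norm_num)]
    | 2 => rw [revAt_le (by norm_num), hcoeff0, hcoeff2]
    | (n+3) =>
      rw [revAt_eq_self_of_lt (by omega)]
  · omega


set_option maxHeartbeats 1000000 in
/-- Salem's monotonicity: if `P` is a P-V polynomial for the P-V number `θ`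
(no reciprocal factors, `P(1) ≠ 0`), and `α n > 1` is the real root of
`Q_n^±(t) = t^n P(t) ± P_*(t)` outside the unit circle, then: if `±ℓ(P) > 0`
the sequence `(α n)` is monotone increasing with `α n < θ`, and if
`±ℓ(P) < 0` it is monotone decreasing with `α n > θ`. -/
theorem stmt_12 (P : Polynomial ℤ) (hP : P.Monic)
    (θ : ℝ) (hθ : 1 < θ) (hroot : (Polynomial.aeval (θ : ℂ)) P = 0)
    (hin : ∀ z : ℂ, (Polynomial.aeval z) P = 0 → z ≠ (θ : ℂ) → ‖z‖ < 1)
    (hrecip : ¬ ∃ q : Polynomial ℤ, q ∣ P ∧ 0 < q.natDegree ∧ q.reverse = q)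
    (hone : P.eval 1 ≠ 0)
    (ε : ℤ) (hε : ε = 1 ∨ ε = -1)
    (α : ℕ → ℝ)
    (hα : ∀ n : ℕ, 1 ≤ n → 1 < α n ∧
        (Polynomial.aeval (α n)) (X ^ n * P + C ε * P.reverse) = 0 ∧
        ∀ x : ℝ, 1 < x →
          (Polynomial.aeval x) (X ^ n * P + C ε * P.reverse) = 0 → x = α n) :
    (0 < ε * P.trailingCoeff →
        ∀ n : ℕ, 1 ≤ n → α n < α (n + 1) ∧ α n < θ) ∧
      (ε * P.trailingCoeff < 0 →
        ∀ n : ℕ, 1 ≤ n → α (n + 1) < α n ∧ θ < α n) := by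
  classical
  have hθ0 : (0:ℝ) < θ := by linarith
  have hθR : aeval θ P = 0 := by
    have h := hroot; rw [← castRC] at h; exact_mod_cast h
  have hPne0 : P ≠ 0 := hP.ne_zero
  have hint : IsIntegral ℤ θ := ⟨P, hP, by rw [← aeval_def]; exact hθR⟩
  have hεR : ((ε:ℝ) = 1 ∨ (ε:ℝ) = -1) := by rcases hε with h | h <;> simp [h]
  have h1aeval : aeval (1:ℝ) P = ((P.eval 1 : ℤ) : ℝ) := by
    rw [← evmap, Polynomial.eval_one_map]; simp
  have hone' : aeval (1:ℝ) P ≠ 0 := by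
    rw [h1aeval]; exact_mod_cast hone
  have hPne1 : ∀ x : ℝ, 1 < x → x ≠ θ → aeval x P ≠ 0 := by
    intro x hx hxθ h0
    have h1 := hin x (castRC0 h0) (by exact_mod_cast hxθ)
    rw [Complex.norm_real, Real.norm_eq_abs, abs_of_pos (by linarith)] at h1
    linarith
  have hroots' : ∀ z : ℂ, aeval z P = 0 → z = (θ:ℂ) ∨ ‖z‖ < 1 := by
    intro z hz
    by_cases h : z = (θ:ℂ)
    · exact Or.inl h
    · exact Or.inr (hin z hz h)
  obtain ⟨v, k, hPvk⟩ := structThm θ hθ hint P.natDegree P le_rfl hP hroots'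
  set m := minpoly ℤ θ with hm_def
  have hmm : m.Monic := minpoly.monic hint
  have hmθ : aeval θ m = 0 := minpoly.aeval ℤ θ
  have hev : ∀ x : ℝ, aeval x P = x ^ v * (aeval x m) ^ k := by
    intro x; rw [hPvk]; simp [map_mul, map_pow]
  have hk : k ≠ 0 := by
    intro h
    have h0 := hev θ
    rw [hθR, h, pow_zero, mul_one] at h0
    have hp : (0:ℝ) < θ ^ v := pow_pos hθ0 v
    rw [← h0] at hp; exact lt_irrefl 0 hp
  have hmdvd : m ∣ P := by
    rw [hPvk]; exact Dvd.dvd.mul_left (dvd_pow_self m hk) _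
  have hmroots : ∀ z : ℂ, aeval z m = 0 → z = (θ:ℂ) ∨ ‖z‖ < 1 := by
    intro z hz
    obtain ⟨B, hB⟩ := hmdvd
    exact hroots' z (by rw [hB, map_mul, hz, zero_mul])
  have hnrecipm : ¬(m.reverse = m ∧ 0 < m.natDegree) := by
    rintro ⟨hq1, hq2⟩; exact hrecip ⟨m, hmdvd, hq2, hq1⟩
  have core := coreM θ hθ hint hmroots hnrecipm
  have coreP : ∀ r : ℝ, 0 < r → r * θ ≤ 1 → aeval r P ≠ 0 := by
    intro r h0 h1 hz
    rw [hev] at hz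
    rcases mul_eq_zero.mp hz with h | h
    · exact (pow_ne_zero v (ne_of_gt h0)) h
    · exact core r h0 h1 ((pow_eq_zero_iff hk).mp h)
  have hPposGT : ∀ x : ℝ, θ < x → 0 < aeval x P := by
    intro x hx
    refine posAtZ P (by rw [hP.leadingCoeff]; norm_num) x ?_
    intro y hy
    exact hPne1 y (by linarith) (by intro h; rw [h] at hy; linarith)
  have hrevNoZero : ∀ y : ℝ, θ ≤ y → aeval y P.reverse ≠ 0 := by
    intro y hy h0
    have hy0 : (0:ℝ) < y := by linarith
    rw [revEval y (ne_of_gt hy0)] at h0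
    rcases mul_eq_zero.mp h0 with h | h
    · exact (pow_ne_zero _ (ne_of_gt hy0)) h
    · refine coreP y⁻¹ (by positivity) ?_ h
      calc y⁻¹ * θ ≤ y⁻¹ * y := mul_le_mul_of_nonneg_left hy (by positivity)
        _ = 1 := inv_mul_cancel₀ (ne_of_gt hy0)
  have htcne : P.trailingCoeff ≠ 0 := trailingCoeff_nonzero_iff_nonzero.mpr hPne0
  have htcneR : ((P.trailingCoeff : ℤ) : ℝ) ≠ 0 := by exact_mod_cast htcne
  have htcsq : (0:ℝ) < ((P.trailingCoeff : ℤ) : ℝ)^2 := by positivity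
  have hN1 : 0 < aeval θ P.reverse * ((P.trailingCoeff : ℤ) : ℝ) := by
    rcases lt_or_gt_of_ne htcne with htc | htc
    · have h := negAtZ P.reverse (by rwa [reverse_leadingCoeff]) θ hrevNoZero
      have : ((P.trailingCoeff : ℤ):ℝ) < 0 := by exact_mod_cast htc
      nlinarith
    · have h := posAtZ P.reverse (by rwa [reverse_leadingCoeff]) θ hrevNoZero
      have : (0:ℝ) < ((P.trailingCoeff : ℤ):ℝ) := by exact_mod_cast htc
      nlinarith
  have hQeval : ∀ (n : ℕ) (x : ℝ),
      aeval x (X ^ n * P + C ε * P.reverse) = x ^ n * aeval x P + (ε:ℝ) * aeval x P.reverse := by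
    intro n x
    simp [map_add, map_mul, map_pow, aeval_X, aeval_C]
  have hQmonic : ∀ n : ℕ, 1 ≤ n → (X ^ n * P + C ε * P.reverse).Monic := by
    intro n hn
    have h1 : (X ^ n * P).Monic := (monic_X_pow n).mul hP
    refine h1.add_of_left ?_
    have hdeg1 : (X ^ n * P).natDegree = n + P.natDegree := by
      rw [(monic_X_pow n).natDegree_mul hP, natDegree_X_pow]
    have hdeg2 : (C ε * P.reverse).natDegree ≤ P.natDegree := by
      refine le_trans (natDegree_mul_le) ?_
      rw [natDegree_C]
      simpa using P.reverse_natDegree_le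
    calc degree (C ε * P.reverse) ≤ ((C ε * P.reverse).natDegree : WithBot ℕ) :=
          degree_le_natDegree
      _ ≤ (P.natDegree : WithBot ℕ) := by exact_mod_cast hdeg2
      _ < ((n + P.natDegree : ℕ) : WithBot ℕ) := by exact_mod_cast (by omega : P.natDegree < n + P.natDegree)
      _ = ((X ^ n * P).natDegree : WithBot ℕ) := by rw [hdeg1]
      _ = degree (X ^ n * P) := (degree_eq_natDegree h1.ne_zero).symm
  have hQθ : ∀ n : ℕ, aeval θ (X ^ n * P + C ε * P.reverse) = (ε:ℝ) * aeval θ P.reverse := by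
    intro n; rw [hQeval, hθR, mul_zero, zero_add]
  have hQpos : ∀ n : ℕ, 1 ≤ n → ∀ x : ℝ, α n < x →
      0 < aeval x (X ^ n * P + C ε * P.reverse) := by
    intro n hn x hx
    obtain ⟨hα1, hα2, hα3⟩ := hα n hn
    refine posAtZ _ (by rw [(hQmonic n hn).leadingCoeff]; norm_num) x ?_
    intro y hy h0
    have hy1 : 1 < y := by linarith
    have := hα3 y hy1 h0
    rw [this] at hy; linarith
  constructor
  · -- increasing case
    intro h1
    have h1R : 0 < (ε:ℝ) * ((P.trailingCoeff : ℤ) : ℝ) := by exact_mod_cast h1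
    have hεrpθ : 0 < (ε:ℝ) * aeval θ P.reverse := by nlinarith [mul_pos hN1 h1R]
    have hlt : ∀ n : ℕ, 1 ≤ n → α n < θ := by
      intro n hn
      obtain ⟨hα1, hα2, hα3⟩ := hα n hn
      have hQθpos : 0 < aeval θ (X ^ n * P + C ε * P.reverse) := by
        rw [hQθ]; exact hεrpθ
      have hne : α n ≠ θ := by
        intro h; rw [← h, hα2] at hQθpos; exact lt_irrefl 0 hQθpos
      by_contra hcon
      push_neg at hcon
      have hθlt : θ < α n := lt_of_le_of_ne hcon (Ne.symm hne)
      have hpα : 0 < aeval (α n) P := hPposGT _ hθlt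
      have hQn0 : (α n) ^ n * aeval (α n) P + (ε:ℝ) * aeval (α n) P.reverse = 0 := by
        rw [← hQeval n (α n)]; exact hα2
      have hεrpα : (ε:ℝ) * aeval (α n) P.reverse < 0 := by
        have hpow : 0 < (α n) ^ n := pow_pos (by linarith) n
        nlinarith
      have hprodpos := auxSign (Polynomial.continuous_aeval P.reverse) (le_of_lt hθlt)
        (fun y hy _ => hrevNoZero y hy)
      rcases hεR with h | h <;> rw [h] at hεrpθ hεrpα <;> nlinarith
    intro n hn
    refine ⟨?_, hlt n hn⟩
    obtain ⟨hα1, hα2, hα3⟩ := hα n hn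
    obtain ⟨hβ1, hβ2, hβ3⟩ := hα (n+1) (by omega)
    have hαθ := hlt n hn
    have hα0 : (0:ℝ) < α n := by linarith
    have hpαne : aeval (α n) P ≠ 0 := hPne1 _ hα1 (ne_of_lt hαθ)
    have hQn0 : (α n) ^ n * aeval (α n) P + (ε:ℝ) * aeval (α n) P.reverse = 0 := by
      rw [← hQeval n (α n)]; exact hα2
    have hεrpα : (ε:ℝ) * aeval (α n) P.reverse = -((α n) ^ n * aeval (α n) P) := by
      linarith
    have hQsucc : aeval (α n) (X ^ (n+1) * P + C ε * P.reverse)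
        = (1 - α n) * ((ε:ℝ) * aeval (α n) P.reverse) := by
      rw [hQeval]
      linear_combination (α n) * hεrpα
    rcases lt_or_gt_of_ne hone with hp1 | hp1
    · -- P(1) < 0 : the genuinely increasing case
      have hpαneg : aeval (α n) P < 0 := by
        have hprod := auxSign (Polynomial.continuous_aeval P) (le_of_lt hα1) ?_
        · have hc : aeval (1:ℝ) P < 0 := by
            rw [h1aeval]; exact_mod_cast hp1
          nlinarith
        · intro x hx1 hx2
          rcases eq_or_lt_of_le hx1 with he | hl
          · rw [← he]; exact hone'
          · exact hPne1 x hl (by intro h; rw [h] at hx2; linarith)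
      have hεrpαpos : 0 < (ε:ℝ) * aeval (α n) P.reverse := by
        rw [hεrpα]
        have hpow : 0 < (α n) ^ n := pow_pos hα0 n
        nlinarith
      have hQsuccneg : aeval (α n) (X ^ (n+1) * P + C ε * P.reverse) < 0 := by
        rw [hQsucc]; nlinarith
      by_contra hcon
      push_neg at hcon
      rcases eq_or_lt_of_le hcon with he | hl
      · rw [he] at hβ2; rw [hβ2] at hQsuccneg; exact lt_irrefl 0 hQsuccneg
      · have := hQpos (n+1) (by omega) (α n) hl
        linarith
    · -- P(1) > 0 : show this is impossible
      exfalso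
      have hQint : IsIntegral ℚ θ := IsIntegral.tower_top (A := ℚ) hint
      have hsep : (minpoly ℚ θ).Separable := (minpoly.irreducible hQint).separable
      have hqm : minpoly ℚ θ = m.map (algebraMap ℤ ℚ) :=
        minpoly.isIntegrallyClosed_eq_field_fractions' ℚ hint
      have hmRsf : Squarefree (m.map (algebraMap ℤ ℝ)) := by
        have heq : m.map (algebraMap ℤ ℝ) = (minpoly ℚ θ).map (algebraMap ℚ ℝ) := by
          rw [hqm, map_map, ← IsScalarTower.algebraMap_eq]
        rw [heq]; exact hsep.map.squarefree
      have hmRθ : (m.map (algebraMap ℤ ℝ)).IsRoot θ := by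
        rw [IsRoot.def, evmap]; exact hmθ
      have hfact : (X - C θ) * ((m.map (algebraMap ℤ ℝ)) /ₘ (X - C θ)) = m.map (algebraMap ℤ ℝ) :=
        mul_divByMonic_eq_iff_isRoot.mpr hmRθ
      set g := (m.map (algebraMap ℤ ℝ)) /ₘ (X - C θ) with hg
      have hgm : g.Monic := (monic_X_sub_C θ).of_mul_monic_left (by rw [hfact]; exact hmm.map _)
      have hgθ : g.eval θ ≠ 0 := by
        intro h0
        obtain ⟨h, hh⟩ := dvd_iff_isRoot.mpr h0
        have hdvd2 : (X - C θ) * (X - C θ) ∣ m.map (algebraMap ℤ ℝ) := ⟨h, by rw [← hfact, hh]; ring⟩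
        exact Polynomial.not_isUnit_X_sub_C θ (hmRsf _ hdvd2)
      have hgne : ∀ y : ℝ, 1 ≤ y → g.eval y ≠ 0 := by
        intro y hy h0
        have hmRy : aeval y m = 0 := by
          rw [← evmap, ← hfact, eval_mul, h0, mul_zero]
        have hPy : aeval y P = 0 := by
          rw [hev, hmRy, zero_pow hk, mul_zero]
        rcases eq_or_lt_of_le hy with he | hl
        · rw [← he] at hPy; exact hone' hPy
        · rcases eq_or_ne y θ with rfl | hne
          · exact hgθ h0
          · exact hPne1 y hl hne hPy
      have hg1 : 0 < g.eval 1 := posAtR g (by rw [hgm.leadingCoeff]; norm_num) 1 hgne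
      have hm1lt : aeval (1:ℝ) m < 0 := by
        rw [← evmap, ← hfact, eval_mul, eval_sub, eval_X, eval_C]
        nlinarith
      have hkeven : Even k := by
        rcases Nat.even_or_odd k with h | h
        · exact h
        · exfalso
          have hPev : aeval (1:ℝ) P = (aeval (1:ℝ) m) ^ k := by
            rw [hev]; rw [one_pow, one_mul]
          have hneg := h.pow_neg hm1lt
          rw [← hPev] at hneg
          have hpos : (0:ℝ) < aeval (1:ℝ) P := by rw [h1aeval]; exact_mod_cast hp1
          linarith
      have hminvθ : aeval θ⁻¹ m ≠ 0 :=
        core θ⁻¹ (by positivity) (by rw [inv_mul_cancel₀ (ne_of_gt hθ0)])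
      have hrpθpos : 0 < aeval θ P.reverse := by
        rw [revEval θ (ne_of_gt hθ0), hev]
        have h2 := hkeven.pow_pos hminvθ
        positivity
      have htcpos : (0:ℝ) < ((P.trailingCoeff : ℤ) : ℝ) := by nlinarith
      have hε1 : (ε:ℝ) = 1 := by
        rcases hεR with h | h
        · exact h
        · exfalso; rw [h] at h1R; nlinarith
      have hpαpos : 0 < aeval (α n) P := by
        rw [hev]
        have hmne : aeval (α n) m ≠ 0 := by
          intro h0; exact hpαne (by rw [hev, h0, zero_pow hk, mul_zero])
        have h2 := hkeven.pow_pos hmne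
        positivity
      have hrpαnonneg : 0 ≤ aeval (α n) P.reverse := by
        rw [revEval _ (ne_of_gt hα0), hev]
        have h2 := hkeven.pow_nonneg (aeval (α n)⁻¹ m)
        positivity
      rw [hε1, one_mul] at hQn0
      nlinarith [pow_pos hα0 n]
  · -- decreasing case
    intro h2
    have h2R : (ε:ℝ) * ((P.trailingCoeff : ℤ) : ℝ) < 0 := by exact_mod_cast h2
    have hεrpθneg : (ε:ℝ) * aeval θ P.reverse < 0 := by
      have hkey := mul_neg_of_pos_of_neg hN1 h2R
      nlinarith [hkey, htcsq]
    have hgt : ∀ n : ℕ, 1 ≤ n → θ < α n := by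
      intro n hn
      obtain ⟨hα1, hα2, hα3⟩ := hα n hn
      have hQθneg : aeval θ (X ^ n * P + C ε * P.reverse) < 0 := by
        rw [hQθ]; exact hεrpθneg
      have hne : θ ≠ α n := by
        intro h; rw [h, hα2] at hQθneg; exact lt_irrefl 0 hQθneg
      by_contra hcon
      push_neg at hcon
      have hθlt : α n < θ := lt_of_le_of_ne hcon (Ne.symm hne)
      have := hQpos n hn θ hθlt
      linarith
    intro n hn
    refine ⟨?_, hgt n hn⟩
    obtain ⟨hα1, hα2, hα3⟩ := hα n hn
    obtain ⟨hβ1, hβ2, hβ3⟩ := hα (n+1) (by omega)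
    have hαθ := hgt n hn
    have hβθ := hgt (n+1) (by omega)
    have hα0 : (0:ℝ) < α n := by linarith
    have hpα : 0 < aeval (α n) P := hPposGT _ hαθ
    have hQn0 : (α n) ^ n * aeval (α n) P + (ε:ℝ) * aeval (α n) P.reverse = 0 := by
      rw [← hQeval n (α n)]; exact hα2
    have hεrpα : (ε:ℝ) * aeval (α n) P.reverse = -((α n) ^ n * aeval (α n) P) := by
      linarith
    have hQsucc : aeval (α n) (X ^ (n+1) * P + C ε * P.reverse)
        = (1 - α n) * ((ε:ℝ) * aeval (α n) P.reverse) := by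
      rw [hQeval]
      linear_combination (α n) * hεrpα
    have hQsuccpos : 0 < aeval (α n) (X ^ (n+1) * P + C ε * P.reverse) := by
      rw [hQsucc, hεrpα]
      have hpow : 0 < (α n) ^ n := pow_pos hα0 n
      nlinarith [mul_pos (show (0:ℝ) < α n - 1 by linarith) (mul_pos hpow hpα)]
    by_contra hcon
    push_neg at hcon
    rcases eq_or_lt_of_le hcon with he | hl
    · rw [← he] at hβ2; rw [hβ2] at hQsuccpos; exact lt_irrefl 0 hQsuccpos
    · have hQθ1 : aeval θ (X ^ (n+1) * P + C ε * P.reverse) < 0 := by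
        rw [hQθ]; exact hεrpθneg
      have hmaxlt : max (α n) θ < α (n+1) := max_lt hl hβθ
      have hnoroot : ∀ x, min (α n) θ ≤ x → x ≤ max (α n) θ →
          aeval x (X ^ (n+1) * P + C ε * P.reverse) ≠ 0 := by
        intro x hx1 hx2 h0
        have hx1' : 1 < x := lt_of_lt_of_le (lt_min hα1 (by linarith)) hx1
        have hxx := hβ3 x hx1' h0
        rw [hxx] at hx2; linarith
      have hprod := auxSign (Polynomial.continuous_aeval _) (min_le_max (a := α n) (b := θ)) hnoroot
      rcases le_total (α n) θ with hle | hle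
      · rw [min_eq_left hle, max_eq_right hle] at hprod; nlinarith
      · rw [min_eq_right hle, max_eq_left hle] at hprod; nlinarith
end

section
/- Let P be a monic integer polynomial with simple roots α_1, ..., α_s outside the unit circle, and let α_i^{(n)} denote the roots of Q_n(t) = t^n P(t) ± P_*(t) outside the unit circle labeled so that α_i^{(n)} → α_i. Then α_i^{(n)} - α_i = (α_i^{(n)})^{-n} R_n where R_n converges to a nonzero constant R; consequently Arg(α_i^{(n)} - α_i) = Arg(R) - n·Arg(α_i) + δ_n with δ_n → 0. -/
open Polynomial Filter

/-- Argument of a complex number normalized so that `z = |z| e^{2πi Arg z}`. -/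
noncomputable def nArg (z : ℂ) : ℝ := Complex.arg z / (2 * Real.pi)

lemma nArg_mul {z w : ℂ} (hz : z ≠ 0) (hw : w ≠ 0) :
    ∃ k : ℤ, nArg (z * w) = nArg z + nArg w + k := by
  have h := Complex.arg_mul_coe_angle hz hw
  rw [← Real.Angle.coe_add, Real.Angle.angle_eq_iff_two_pi_dvd_sub] at h
  obtain ⟨k, hk⟩ := h
  have hπ : (2 * Real.pi) ≠ 0 := by positivity
  refine ⟨k, ?_⟩
  unfold nArg
  field_simp
  linear_combination hk

lemma nArg_pow {z : ℂ} (hz : z ≠ 0) (n : ℕ) :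
    ∃ k : ℤ, nArg (z ^ n) = n * nArg z + k := by
  induction n with
  | zero => exact ⟨0, by simp [nArg]⟩
  | succ m ih =>
    obtain ⟨k, hk⟩ := ih
    obtain ⟨k', hk'⟩ := nArg_mul (pow_ne_zero m hz) hz
    refine ⟨k + k', ?_⟩
    rw [pow_succ, hk', hk]
    push_cast
    ring

lemma nArg_tendsto {u : ℕ → ℂ} {L : ℂ} (hL : L ≠ 0)
    (hu : Tendsto u atTop (nhds L)) {δ : ℝ} (hδ : 0 < δ) :
    ∀ᶠ n in atTop, ∃ (d : ℝ) (k : ℤ), |d| < δ ∧ nArg (u n) = nArg L + d + k := by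
  have hne : ∀ᶠ n in atTop, u n ≠ 0 := hu.eventually_ne hL
  have hdiv : Tendsto (fun n => u n / L) atTop (nhds 1) := by
    simpa [div_self hL] using hu.div_const L
  have harg : Tendsto (fun n => nArg (u n / L)) atTop (nhds 0) := by
    have hca : ContinuousAt Complex.arg 1 := Complex.continuousAt_arg (by simp)
    have := (hca.tendsto.comp hdiv)
    rw [Complex.arg_one] at this
    have := this.div_const (2 * Real.pi)
    simpa [nArg] using this
  have hsm : ∀ᶠ n in atTop, |nArg (u n / L)| < δ := by
    have := harg.eventually (Metric.ball_mem_nhds (0:ℝ) hδ)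
    filter_upwards [this] with n hn
    simpa [Real.dist_eq] using hn
  filter_upwards [hne, hsm] with n hn hd
  obtain ⟨k, hk⟩ := nArg_mul hL (div_ne_zero hn hL)
  refine ⟨nArg (u n / L), k, hd, ?_⟩
  rw [mul_div_cancel₀ _ hL] at hk
  exact hk

lemma pow_ratio_tendsto_one {v : ℕ → ℂ} {c : ℝ} {r : ℝ} (hr : 1 < r) (hbound : ∀ᶠ n in atTop, ‖v n - 1‖ ≤ c / r ^ n)
    (hsm : ∀ᶠ n in atTop, ‖v n‖ ≤ (1 + r) / 2) :
    Tendsto (fun n => (v n) ^ n) atTop (nhds 1) := by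
  set ρ : ℝ := (1 + r) / 2 with hρ
  have hρ1 : 1 < ρ := by rw [hρ]; linarith
  have hρr : ρ < r := by rw [hρ]; linarith
  clear hρ
  clear_value ρ
  rw [tendsto_iff_norm_sub_tendsto_zero]
  have hg : Tendsto (fun n : ℕ => (c / ρ) * (n * (ρ / r) ^ n)) atTop (nhds 0) := by
    have : Tendsto (fun n : ℕ => (n : ℝ) * (ρ / r) ^ n) atTop (nhds 0) :=
      tendsto_self_mul_const_pow_of_lt_one (by positivity) (by
        rw [div_lt_one (by linarith)]; exact hρr)
    simpa using this.const_mul (c / ρ)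
  refine squeeze_zero' (Eventually.of_forall fun n => norm_nonneg _) ?_ hg
  · filter_upwards [hbound, hsm] with n hb hs
    have key : (v n) ^ n - 1 = (∑ i ∈ Finset.range n, (v n) ^ i) * (v n - 1) := by
      rw [geom_sum_mul]
    rw [key]
    have h1 : ‖∑ i ∈ Finset.range n, (v n) ^ i‖ ≤ n * ρ ^ (n - 1) := by
      calc ‖∑ i ∈ Finset.range n, (v n) ^ i‖ ≤ ∑ i ∈ Finset.range n, ‖(v n) ^ i‖ :=
            norm_sum_le _ _
        _ ≤ ∑ i ∈ Finset.range n, ρ ^ (n - 1) := by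
            apply Finset.sum_le_sum
            intro i hi
            rw [norm_pow]
            calc ‖v n‖ ^ i ≤ ρ ^ i := by
                  exact pow_le_pow_left₀ (norm_nonneg _) hs i
              _ ≤ ρ ^ (n - 1) := pow_le_pow_right₀ hρ1.le
                  (by have := Finset.mem_range.mp hi; omega)
        _ = n * ρ ^ (n - 1) := by rw [Finset.sum_const, Finset.card_range, nsmul_eq_mul]
    calc ‖(∑ i ∈ Finset.range n, (v n) ^ i) * (v n - 1)‖
        = ‖∑ i ∈ Finset.range n, (v n) ^ i‖ * ‖v n - 1‖ := norm_mul _ _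
      _ ≤ (n * ρ ^ (n - 1)) * (c / r ^ n) := by
          apply mul_le_mul h1 hb (norm_nonneg _)
          positivity
      _ ≤ (c / ρ) * (n * (ρ / r) ^ n) := by
          rcases n with _ | m
          · simp
          · apply le_of_eq
            have hr0 : (0:ℝ) < r := by linarith
            have hρ0 : (0:ℝ) < ρ := by linarith
            simp only [Nat.add_sub_cancel]
            rw [div_pow]
            field_simp
            ring


/-- If `P` is monic with simple roots `α_1, …, α_s` outside the unit circle and
`α_i^{(n)}` are the roots of `Q_n = t^n P(t) ± P_*(t)` outside the unit circle
with `α_i^{(n)} → α_i`, then `α_i^{(n)} - α_i = (α_i^{(n)})^{-n} R_n` with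
`R_n → R ≠ 0`; consequently
`Arg(α_i^{(n)} - α_i) = Arg R - n Arg(α_i) + δ_n (mod 1)` with `δ_n → 0`. -/
theorem stmt_15 (P : Polynomial ℤ) (hP : P.Monic)
    (s : ℕ) (α : Fin s → ℂ) (hinj : Function.Injective α)
    (hroots : ∀ i, (Polynomial.aeval (α i)) P = 0 ∧ 1 < ‖α i‖ ∧
      (P.map (Int.castRingHom ℂ)).rootMultiplicity (α i) = 1)
    (hall : ∀ z : ℂ, (Polynomial.aeval z) P = 0 → 1 < ‖z‖ → ∃ i, z = α i)
    (hPstar : ∀ i, (Polynomial.aeval (α i)) P.reverse ≠ 0)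
    (ε : ℤ) (hε : ε = 1 ∨ ε = -1)
    (αn : ℕ → Fin s → ℂ) (N₀ : ℕ)
    (hαn : ∀ n : ℕ, N₀ ≤ n → ∀ i,
      (Polynomial.aeval (αn n i)) (X ^ n * P + C ε * P.reverse) = 0 ∧
        1 < ‖αn n i‖)
    (hlim : ∀ i, Tendsto (fun n => αn n i) atTop (nhds (α i))) :
    ∀ i, ∃ R : ℂ, R ≠ 0 ∧
      Tendsto (fun n => (αn n i) ^ n * (αn n i - α i)) atTop (nhds R) ∧
      ∀ δ : ℝ, 0 < δ → ∃ N : ℕ, ∀ n : ℕ, N < n → ∃ (d : ℝ) (k : ℤ), |d| < δ ∧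
        nArg (αn n i - α i) = nArg R - n * nArg (α i) + d + k := by
  intro i
  obtain ⟨hroot, habs, hmult⟩ := hroots i
  have ha0 : α i ≠ 0 := by
    intro h; rw [h] at habs; simp at habs; linarith
  have hε0 : (ε : ℂ) ≠ 0 := by
    rcases hε with h | h <;> rw [h] <;> norm_num
  -- factor P over ℂ
  have hPc0 : P.map (Int.castRingHom ℂ) ≠ 0 := (hP.map _).ne_zero
  set Pc : Polynomial ℂ := P.map (Int.castRingHom ℂ) with hPcdef
  set Q : Polynomial ℂ := Pc /ₘ (X - C (α i)) ^ (Pc.rootMultiplicity (α i)) with hQdef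
  have hQa : Q.eval (α i) ≠ 0 :=
    eval_divByMonic_pow_rootMultiplicity_ne_zero (α i) hPc0
  have hfact : (X - C (α i)) * Q = Pc := by
    have h := pow_mul_divByMonic_rootMultiplicity_eq Pc (α i)
    rw [hmult, pow_one] at h
    rw [hQdef, hmult, pow_one]
    exact h
  have heval : ∀ z : ℂ, (Polynomial.aeval z) P = (z - α i) * Q.eval z := by
    intro z
    have : (Polynomial.aeval z) P = Pc.eval z := by
      rw [hPcdef, aeval_def, eval_map, ← algebraMap_int_eq]
    rw [this, ← hfact]
    simp
  have hQa' : Q.eval (α i) ≠ 0 := hQa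
  -- the root equation
  have heq : ∀ n : ℕ, N₀ ≤ n →
      (αn n i) ^ n * ((αn n i - α i) * Q.eval (αn n i))
        + (ε : ℂ) * (Polynomial.aeval (αn n i)) P.reverse = 0 := by
    intro n hn
    have h := (hαn n hn i).1
    rw [map_add, map_mul, map_mul, aeval_X_pow, aeval_C, heval] at h
    simpa using h
  set R : ℂ := -((ε : ℂ) * (Polynomial.aeval (α i)) P.reverse) / Q.eval (α i) with hRdef
  have hR0 : R ≠ 0 := by
    apply div_ne_zero _ hQa
    simpa using mul_ne_zero hε0 (hPstar i)
  -- continuity facts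
  have hQtend : Tendsto (fun n => Q.eval (αn n i)) atTop (nhds (Q.eval (α i))) := by
    exact ((Q.continuous.tendsto (α i)).comp (hlim i))
  have hPsttend : Tendsto (fun n => (Polynomial.aeval (αn n i)) P.reverse) atTop
      (nhds ((Polynomial.aeval (α i)) P.reverse)) :=
    ((P.reverse.continuous_aeval.tendsto (α i)).comp (hlim i))
  have hQne : ∀ᶠ n in atTop, Q.eval (αn n i) ≠ 0 := hQtend.eventually_ne hQa
  have hN₀ : ∀ᶠ n in atTop, N₀ ≤ n := eventually_ge_atTop N₀
  -- main convergence
  have hgt : Tendsto (fun n => -((ε : ℂ) * (Polynomial.aeval (αn n i)) P.reverse)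
      / Q.eval (αn n i)) atTop (nhds R) := by
    rw [hRdef]
    exact (((hPsttend.const_mul _).neg).div hQtend hQa)
  have hmain : Tendsto (fun n => (αn n i) ^ n * (αn n i - α i)) atTop (nhds R) := by
    apply hgt.congr'
    filter_upwards [hQne, hN₀] with n hq hn
    have h := heq n hn
    field_simp
    linear_combination -h
  refine ⟨R, hR0, hmain, ?_⟩
  -- setup for (α/αn)^n → 1
  have hr1 : 1 < (1 + ‖α i‖) / 2 := by linarith
  have hrL : (1 + ‖α i‖) / 2 < ‖α i‖ := by linarith
  set r : ℝ := (1 + ‖α i‖) / 2 with hrdef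
  have habstend : Tendsto (fun n => ‖αn n i‖) atTop
      (nhds (‖α i‖)) := (continuous_norm.tendsto _).comp (hlim i)
  have hrle : ∀ᶠ n in atTop, r ≤ ‖αn n i‖ := by
    filter_upwards [habstend.eventually (lt_mem_nhds hrL)] with n h
    exact h.le
  have hRabs : Tendsto (fun n => ‖(αn n i) ^ n * (αn n i - α i)‖) atTop
      (nhds (‖R‖)) := (continuous_norm.tendsto _).comp hmain
  have hcle : ∀ᶠ n in atTop, ‖(αn n i) ^ n * (αn n i - α i)‖
      ≤ ‖R‖ + 1 := by
    filter_upwards [hRabs.eventually (gt_mem_nhds (lt_add_one _))] with n h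
    exact h.le
  set v : ℕ → ℂ := fun n => α i / αn n i with hvdef
  have hbound : ∀ᶠ n in atTop, ‖v n - 1‖ ≤ (‖R‖ + 1) / r ^ n := by
    filter_upwards [hrle, hcle] with n h1 h2
    have hx0 : αn n i ≠ 0 := by
      intro h; rw [h] at h1; simp at h1; linarith
    have hax : (0:ℝ) < ‖αn n i‖ := norm_pos_iff.mpr hx0
    have e1 : v n - 1 = (α i - αn n i) / αn n i := by
      rw [hvdef]; field_simp
    have e2 : ‖αn n i - α i‖
        = ‖(αn n i) ^ n * (αn n i - α i)‖ / ‖αn n i‖ ^ n := by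
      rw [norm_mul, norm_pow]
      field_simp
    calc ‖v n - 1‖ ≤ ‖αn n i - α i‖ := by
          rw [e1, norm_div, norm_sub_rev]
          exact div_le_self (by positivity) (le_trans hr1.le h1)
      _ = ‖(αn n i) ^ n * (αn n i - α i)‖ / ‖αn n i‖ ^ n := e2
      _ ≤ (‖R‖ + 1) / r ^ n := by
          apply div_le_div₀ (by positivity) h2 (by positivity)
          exact pow_le_pow_left₀ (by linarith) h1 n
  have hvone : Tendsto v atTop (nhds 1) := by
    have := (tendsto_const_nhds (x := α i)).div (hlim i) ha0
    rw [div_self ha0] at this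
    exact this
  have hsm : ∀ᶠ n in atTop, ‖v n‖ ≤ (1 + r) / 2 := by
    have habsv : Tendsto (fun n => ‖v n‖) atTop (nhds 1) := by
      simpa [Function.comp_def] using (continuous_norm.tendsto _).comp hvone
    filter_upwards [habsv.eventually (gt_mem_nhds (show (1:ℝ) < (1 + r)/2 by linarith))]
      with n h
    exact h.le
  have hvpow : Tendsto (fun n => (v n) ^ n) atTop (nhds 1) :=
    pow_ratio_tendsto_one hr1 hbound hsm
  have hw : Tendsto (fun n => (αn n i - α i) * (α i) ^ n) atTop (nhds R) := by
    have h := hmain.mul hvpow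
    rw [mul_one] at h
    apply h.congr'
    filter_upwards [hrle] with n h1
    have hx0 : αn n i ≠ 0 := by
      intro h; rw [h] at h1; simp at h1; linarith
    rw [hvdef]
    simp only [div_pow]
    field_simp
  -- the argument statement
  intro δ hδ
  have hne_a : ∀ᶠ n in atTop, αn n i ≠ α i := by
    filter_upwards [hN₀] with n hn hcontr
    have h := heq n hn
    rw [hcontr] at h
    simp at h
    exact (mul_ne_zero hε0 (hPstar i)) (by simpa using h)
  have hargR := nArg_tendsto hR0 hw hδ
  have key : ∀ᶠ n in atTop, ∃ (d : ℝ) (k : ℤ), |d| < δ ∧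
      nArg (αn n i - α i) = nArg R - n * nArg (α i) + d + k := by
    filter_upwards [hargR, hne_a] with n hdk hne
    obtain ⟨d, k, hdlt, hdeq⟩ := hdk
    obtain ⟨k₁, hk₁⟩ := nArg_mul (sub_ne_zero.mpr hne) (pow_ne_zero n ha0)
    obtain ⟨k₂, hk₂⟩ := nArg_pow ha0 n
    refine ⟨d, k - k₁ - k₂, hdlt, ?_⟩
    rw [hk₂] at hk₁
    rw [hk₁] at hdeq
    push_cast
    linarith
  obtain ⟨N, hN⟩ := eventually_atTop.mp key
  exact ⟨N, fun n hn => hN n hn.le⟩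
end

section
/- Let S_1 be an invertible integer matrix of size d of block form [[S_0, x],[y^T, s]] with S_0 of size d-1, and let v = (0,...,0,1)^T ∈ ℤ^d. Then det(t S_1 - (S_1^T ∓ v v^T)) = det(t S_1 - S_1^T) ± det(t S_0 - S_0^T). -/
open Polynomial Matrix

/-- For an invertible integer matrix `S₁ = [[S₀, x],[yᵀ, s]]` and
`v = (0,…,0,1)ᵀ`, one has
`det(t S₁ - (S₁ᵀ ∓ v vᵀ)) = det(t S₁ - S₁ᵀ) ± det(t S₀ - S₀ᵀ)`
as polynomials in `t`. -/
theorem stmt_17 (d : ℕ) (S₀ : Matrix (Fin d) (Fin d) ℤ)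
    (x y : Fin d → ℤ) (s : ℤ)
    (S₁ : Matrix (Fin d ⊕ Fin 1) (Fin d ⊕ Fin 1) ℤ)
    (hS₁ : S₁ = Matrix.fromBlocks S₀ (Matrix.of fun i (_ : Fin 1) => x i)
      (Matrix.of fun (_ : Fin 1) j => y j) (Matrix.of fun _ _ => s))
    (hinv : IsUnit S₁.det)
    (v : (Fin d ⊕ Fin 1) → Polynomial ℤ) (hv : v = Sum.elim (fun _ => (0 : Polynomial ℤ)) (fun _ => (1 : Polynomial ℤ)))
    (ε : ℤ) (hε : ε = 1 ∨ ε = -1) :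
    Matrix.det ((X : Polynomial ℤ) • S₁.map C -
        ((S₁.map C)ᵀ - C ε • Matrix.vecMulVec v v)) =
      Matrix.det ((X : Polynomial ℤ) • S₁.map C - (S₁.map C)ᵀ) +
        C ε * Matrix.det ((X : Polynomial ℤ) • S₀.map C - (S₀.map C)ᵀ) := by
  set A₀ : Matrix (Fin d ⊕ Fin 1) (Fin d ⊕ Fin 1) (Polynomial ℤ) :=
    (X : Polynomial ℤ) • S₁.map C - (S₁.map C)ᵀ with hA₀
  have key : (X : Polynomial ℤ) • S₁.map C - ((S₁.map C)ᵀ - C ε • Matrix.vecMulVec v v)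
      = A₀.updateCol (Sum.inr 0)
          ((fun i => A₀ i (Sum.inr 0)) + C ε • v) := by
    ext i j
    rcases j with j | j
    · simp [hA₀, Matrix.updateCol_apply, hv, Matrix.vecMulVec_apply]
    · have hj : j = 0 := Subsingleton.elim _ _
      subst hj
      rcases i with i | i <;>
        simp [hA₀, Matrix.updateCol_apply, hv, Matrix.vecMulVec_apply] <;> ring
  rw [key, Matrix.det_updateCol_add]
  congr 1
  · exact congrArg Matrix.det (A₀.updateCol_eq_self (Sum.inr 0))
  · rw [Matrix.det_updateCol_smul]
    congr 1
    have hblock : A₀.updateCol (Sum.inr 0) v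
        = Matrix.fromBlocks ((X : Polynomial ℤ) • S₀.map C - (S₀.map C)ᵀ) 0
            (Matrix.of fun (_ : Fin 1) j => (X : Polynomial ℤ) * C (y j) - C (x j)) 1 := by
      subst hS₁
      ext i j
      rcases i with i | i <;> rcases j with j | j
      · simp [hA₀, Matrix.updateCol_apply, hv]
      · simp [hA₀, Matrix.updateCol_apply, hv, Subsingleton.elim j (0 : Fin 1)]
      · simp [hA₀, Matrix.updateCol_apply, hv]
      · simp [hA₀, Matrix.updateCol_apply, hv, Subsingleton.elim j (0 : Fin 1),
          Subsingleton.elim i (0 : Fin 1), Matrix.one_apply]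
    rw [hblock, Matrix.det_fromBlocks_zero₁₂]
    simp
end
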